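/- arXiv:1906.04492 — 6 statements merged into one kernel-verified Lean document; each statement's English description precedes it below -/
import Mathlib

section
/- An induced subgraph G of the hypercube Q_m has VC-dimension at most 1 if and only if G is a virtual isometric tree of Q_m, i.e., there exists an isometric tree T of Q_m (a tree isometrically embedded in Q_m) containing G as an induced subgraph. -/
open Finset

/-- The hypercube graph on subsets of `Fin m`. -/
def cubeGraph (m : ℕ) : SimpleGraph (Finset (Fin m)) where
  Adj A B := (symmDiff A B).card = 1
  symm := ⟨fun A B h => by show (symmDiff B A).card = 1; rwa [symmDiff_comm]⟩
  loopless := ⟨fun A h => by simp only [symmDiff_self, bot_eq_empty, card_empty] at h; exact absurd h (by norm_num)⟩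

/-- `V` is (the vertex set of) a partial cube isometrically embedded in `Q_m`:
the distance in the induced subgraph equals the Hamming distance. -/
def IsPC {m : ℕ} (V : Set (Finset (Fin m))) : Prop :=
  ∀ u v : V, ((cubeGraph m).induce V).dist u v = (symmDiff u.1 v.1).card

def Shatters {m : ℕ} (V : Set (Finset (Fin m))) (Y : Finset (Fin m)) : Prop :=
  ∀ Z ⊆ Y, ∃ B ∈ V, B ∩ Y = Z

def VCdimLE {m : ℕ} (V : Set (Finset (Fin m))) (d : ℕ) : Prop :=
  ∀ Y : Finset (Fin m), Shatters V Y → Y.card ≤ d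

inductive PCStep {m : ℕ} : Set (Finset (Fin m)) → Set (Finset (Fin m)) → Prop
  | contract (i : Fin m) (V : Set (Finset (Fin m))) :
      PCStep V ((fun B => B.erase i) '' V)
  | restrictPos (i : Fin m) (V : Set (Finset (Fin m))) :
      PCStep V {B ∈ V | i ∈ B}
  | restrictNeg (i : Fin m) (V : Set (Finset (Fin m))) :
      PCStep V {B ∈ V | i ∉ B}

/-- Partial-cube minor relation: a sequence of contractions and restrictions. -/
def PCMinor {m : ℕ} : Set (Finset (Fin m)) → Set (Finset (Fin m)) → Prop :=
  Relation.ReflTransGen PCStep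

/-- `W` is (the vertex set of) a `k`-dimensional subcube of `Q_m`. -/
def IsCubeFam {m : ℕ} (k : ℕ) (W : Set (Finset (Fin m))) : Prop :=
  ∃ (Y X : Finset (Fin m)), Disjoint Y X ∧ X.card = k ∧
    W = {B | ∃ Z ⊆ X, B = Y ∪ Z}

/-- `G` has the cube `Q_k` as a pc-minor. -/
def HasQMinor {m : ℕ} (V : Set (Finset (Fin m))) (k : ℕ) : Prop :=
  ∃ W, PCMinor V W ∧ IsCubeFam k W

def hdist {m : ℕ} (A B : Finset (Fin m)) : ℕ := (symmDiff A B).card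

def IsConvexIn {m : ℕ} (V S : Set (Finset (Fin m))) : Prop :=
  S ⊆ V ∧ ∀ u ∈ S, ∀ v ∈ S, ∀ x ∈ V, hdist u x + hdist x v = hdist u v → x ∈ S

def convexHullIn {m : ℕ} (V S : Set (Finset (Fin m))) : Set (Finset (Fin m)) :=
  ⋂₀ {T | S ⊆ T ∧ IsConvexIn V T}

def IsGatedIn {m : ℕ} (V S : Set (Finset (Fin m))) : Prop :=
  S ⊆ V ∧ ∀ x ∈ V, ∃ g ∈ S, ∀ y ∈ S, hdist x g + hdist g y = hdist x y

/-- The standardly embedded full subdivision `SK_n` in `Q_n`: singletons and pairs. -/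
def SKset (n : ℕ) : Set (Finset (Fin n)) := {B | B.card = 1 ∨ B.card = 2}

/-- A standardly embedded copy of `SK_n` in `Q_m` along the injection `ι`. -/
def skCopy {m : ℕ} (n : ℕ) (ι : Fin n → Fin m) : Set (Finset (Fin m)) :=
  (fun B => B.image ι) '' SKset n



section basics
variable {m : ℕ} {A B C : Finset (Fin m)}

lemma hdist_comm : hdist A B = hdist B A := by rw [hdist, hdist, symmDiff_comm]

lemma hdist_self : hdist A A = 0 := by simp [hdist]

lemma hdist_eq_zero : hdist A B = 0 ↔ A = B := by
  rw [hdist, Finset.card_eq_zero, ← Finset.bot_eq_empty, symmDiff_eq_bot]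

lemma symmDiff_cancel_mid : symmDiff (symmDiff A B) (symmDiff B C) = symmDiff A C := by
  rw [symmDiff_assoc, ← symmDiff_assoc B B C, symmDiff_self, bot_symmDiff]

lemma hdist_triangle : hdist A C ≤ hdist A B + hdist B C := by
  rw [hdist, hdist, hdist]
  calc (symmDiff A C).card ≤ (symmDiff A B ∪ symmDiff B C).card := by
        apply Finset.card_le_card
        have := symmDiff_triangle A B C
        simpa [Finset.sup_eq_union] using this
    _ ≤ _ := Finset.card_union_le _ _

lemma btw_symmDiff_subset (h : hdist A B + hdist B C = hdist A C) :
    symmDiff A B ⊆ symmDiff A C := by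
  have hdisj : Disjoint (symmDiff A B) (symmDiff B C) := by
    by_contra hd
    rw [Finset.not_disjoint_iff] at hd
    obtain ⟨x, hx1, hx2⟩ := hd
    have hsub : symmDiff A C ⊆ symmDiff A B ∪ symmDiff B C := by
      have := symmDiff_triangle A B C
      simpa [Finset.sup_eq_union] using this
    have hcard : (symmDiff A C).card ≤ (symmDiff A B ∪ symmDiff B C).card :=
      Finset.card_le_card hsub
    have : (symmDiff A B ∪ symmDiff B C).card < (symmDiff A B).card + (symmDiff B C).card := by
      have hui := Finset.card_union_add_card_inter (symmDiff A B) (symmDiff B C)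
      have hpos : 0 < (symmDiff A B ∩ symmDiff B C).card :=
        Finset.card_pos.2 ⟨x, Finset.mem_inter.2 ⟨hx1, hx2⟩⟩
      have hle : (symmDiff A B ∩ symmDiff B C).card ≤ (symmDiff A B).card :=
        Finset.card_le_card inter_subset_left
      omega
    rw [hdist, hdist, hdist] at h
    omega
  intro x hx
  have hx2 : x ∉ symmDiff B C := fun hc => (Finset.disjoint_left.1 hdisj hx) hc
  have : x ∈ symmDiff (symmDiff A B) (symmDiff B C) := by
    rw [Finset.mem_symmDiff]; exact Or.inl ⟨hx, hx2⟩
  rwa [symmDiff_cancel_mid] at this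

lemma btw_trans {z u v a : Finset (Fin m)}
    (h1 : hdist u z + hdist z a = hdist u a)
    (h2 : hdist u a + hdist a v = hdist u v) :
    hdist u z + hdist z v = hdist u v := by
  have hle : hdist u z + hdist z v ≤ hdist u v := by
    calc hdist u z + hdist z v ≤ hdist u z + (hdist z a + hdist a v) := by
          have := hdist_triangle (A := z) (B := a) (C := v); omega
      _ = hdist u v := by omega
  have := hdist_triangle (A := u) (B := z) (C := v)
  omega
end basics

section comb
variable {m : ℕ}

/-- one-inclusion step inside a set family -/
def cstep (T : Set (Finset (Fin m))) (A B : Finset (Fin m)) : Prop :=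
  A ∈ T ∧ B ∈ T ∧ hdist A B = 1

def cconn (T : Set (Finset (Fin m))) : Prop :=
  ∀ A ∈ T, ∀ B ∈ T, Relation.ReflTransGen (cstep T) A B

/-- label injectivity: two one-inclusion edges with the same label coincide -/
def clInj (T : Set (Finset (Fin m))) : Prop :=
  ∀ A B A' B' : Finset (Fin m), A ∈ T → B ∈ T → A' ∈ T → B' ∈ T →
    hdist A B = 1 → symmDiff A B = symmDiff A' B' →
    (A = A' ∧ B = B') ∨ (A = B' ∧ B = A')

def Good (T : Set (Finset (Fin m))) : Prop := T.Nonempty ∧ cconn T ∧ clInj T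

lemma cstep_symm {T : Set (Finset (Fin m))} : Symmetric (cstep T) := by
  intro a b ⟨h1, h2, h3⟩
  exact ⟨h2, h1, by rwa [hdist_comm]⟩

lemma cstep_mono {T T' : Set (Finset (Fin m))} (h : T ⊆ T') {a b} (hs : cstep T a b) :
    cstep T' a b := ⟨h hs.1, h hs.2.1, hs.2.2⟩

end comb

section graphwalks
variable {m : ℕ} {T : Set (Finset (Fin m))}

lemma induce_adj_iff {u v : T} : ((cubeGraph m).induce T).Adj u v ↔ hdist u.1 v.1 = 1 :=
  Iff.rfl

/-- the label of a dart -/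
def dlabel (d : ((cubeGraph m).induce T).Dart) : Finset (Fin m) := symmDiff d.fst.1 d.snd.1

lemma dlabel_card (d : ((cubeGraph m).induce T).Dart) : (dlabel d).card = 1 := d.adj

lemma walk_hdist_le {u v : T} (p : ((cubeGraph m).induce T).Walk u v) :
    hdist u.1 v.1 ≤ p.length := by
  induction p with
  | nil => simp [hdist_self]
  | @cons a b c h q ih =>
    have h1 : hdist a.1 b.1 = 1 := h
    have := hdist_triangle (A := a.1) (B := b.1) (C := c.1)
    simp only [SimpleGraph.Walk.length_cons]
    omega

/-- parity: any coordinate in the endpoints' symmetric difference is flipped by some dart -/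
lemma walk_parity {u v : T} (p : ((cubeGraph m).induce T).Walk u v) {x : Fin m}
    (hx : x ∈ symmDiff u.1 v.1) : ∃ d ∈ p.darts, x ∈ dlabel d := by
  induction p with
  | nil => simp [symmDiff_self] at hx
  | @cons a b c h q ih =>
    by_cases hab : x ∈ symmDiff a.1 b.1
    · exact ⟨⟨(a, b), h⟩, by simp, hab⟩
    · have hbc : x ∈ symmDiff b.1 c.1 := by
        have : x ∈ symmDiff (symmDiff a.1 b.1) (symmDiff b.1 c.1) := by
          rw [symmDiff_cancel_mid]; exact hx
        rw [Finset.mem_symmDiff] at this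
        rcases this with ⟨h1, _⟩ | ⟨h1, _⟩
        · exact absurd h1 hab
        · exact h1
      obtain ⟨d, hd, hdl⟩ := ih hbc
      exact ⟨d, by simp [hd], hdl⟩

/-- geodesic walks: all support vertices are metrically between the endpoints -/
lemma geodesic_support_btw {u v : T} (p : ((cubeGraph m).induce T).Walk u v)
    (hlen : p.length = hdist u.1 v.1) :
    ∀ z ∈ p.support, hdist u.1 z.1 + hdist z.1 v.1 = hdist u.1 v.1 := by
  induction p with
  | nil => intro z hz; simp at hz; subst hz; simp [hdist_self]
  | @cons a b c h q ih =>
    intro z hz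
    have h1 : hdist a.1 b.1 = 1 := h
    simp only [SimpleGraph.Walk.length_cons] at hlen
    have hq : q.length = hdist b.1 c.1 := by
      have hle := walk_hdist_le q
      have := hdist_triangle (A := a.1) (B := b.1) (C := c.1)
      have := hdist_triangle (A := b.1) (B := a.1) (C := c.1)
      rw [hdist_comm (A := b.1) (B := a.1)] at this
      omega
    have hbc : hdist b.1 c.1 = hdist a.1 c.1 - 1 ∧ 1 ≤ hdist a.1 c.1 := by
      have hle := walk_hdist_le q
      have := hdist_triangle (A := a.1) (B := b.1) (C := c.1)
      have h2 := hdist_triangle (A := b.1) (B := a.1) (C := c.1)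
      rw [hdist_comm (A := b.1) (B := a.1)] at h2
      omega
    simp only [SimpleGraph.Walk.support_cons, List.mem_cons] at hz
    rcases hz with rfl | hz
    · simp [hdist_self]
    · have hbtw := ih hq z hz
      have hle1 : hdist a.1 z.1 ≤ 1 + hdist b.1 z.1 := by
        have := hdist_triangle (A := a.1) (B := b.1) (C := z.1); omega
      have htri : hdist a.1 c.1 ≤ hdist a.1 z.1 + hdist z.1 c.1 := hdist_triangle
      omega

/-- geodesic walks: all dart labels are inside the endpoints' symmetric difference -/
lemma geodesic_label_subset {u v : T} (p : ((cubeGraph m).induce T).Walk u v)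
    (hlen : p.length = hdist u.1 v.1) :
    ∀ d ∈ p.darts, dlabel d ⊆ symmDiff u.1 v.1 := by
  intro d hd
  have hfst := SimpleGraph.Walk.dart_fst_mem_support_of_mem_darts p hd
  have hsnd := SimpleGraph.Walk.dart_snd_mem_support_of_mem_darts p hd
  have h1 := geodesic_support_btw p hlen _ hfst
  have h2 := geodesic_support_btw p hlen _ hsnd
  have s1 : symmDiff u.1 d.fst.1 ⊆ symmDiff u.1 v.1 := btw_symmDiff_subset h1
  have s2 : symmDiff u.1 d.snd.1 ⊆ symmDiff u.1 v.1 := btw_symmDiff_subset h2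
  intro x hx
  have htr : symmDiff d.fst.1 d.snd.1 ⊆ symmDiff d.fst.1 u.1 ∪ symmDiff u.1 d.snd.1 := by
    have := symmDiff_triangle d.fst.1 u.1 d.snd.1
    simpa [Finset.sup_eq_union] using this
  rcases Finset.mem_union.1 (htr hx) with h | h
  · exact s1 (by rwa [symmDiff_comm] at h)
  · exact s2 h

end graphwalks

section lemmaA
variable {m : ℕ} {T : Set (Finset (Fin m))}

lemma good_reachable (hc : cconn T) {A B : Finset (Fin m)} (hA : A ∈ T) (hB : B ∈ T) :
    ((cubeGraph m).induce T).Reachable ⟨A, hA⟩ ⟨B, hB⟩ := by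
  have h := hc A hA B hB
  induction h with
  | refl => rfl
  | @tail b c hab hbc ih =>
    obtain ⟨hb, hc', hd⟩ := hbc
    have hr := ih hb
    exact hr.trans (SimpleGraph.Adj.reachable (by exact hd))

lemma good_preconnected (hc : cconn T) : ((cubeGraph m).induce T).Preconnected := by
  intro u v
  have := good_reachable hc u.2 v.2
  simpa using this

lemma good_connected (hne : T.Nonempty) (hc : cconn T) :
    ((cubeGraph m).induce T).Connected := by
  haveI : Nonempty T := hne.to_subtype
  exact ⟨good_preconnected hc⟩

/-- singleton label from an adjacency -/
lemma adj_label {u v : T} (h : ((cubeGraph m).induce T).Adj u v) :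
    ∃ x, symmDiff u.1 v.1 = {x} := Finset.card_eq_one.1 h

lemma good_acyclic (hinj : clInj T) : ((cubeGraph m).induce T).IsAcyclic := by
  intro v c hc
  cases c with
  | nil => exact hc.ne_nil rfl
  | @cons _ b _ h q =>
    rw [SimpleGraph.Walk.cons_isCycle_iff] at hc
    obtain ⟨hq, hvb⟩ := hc
    obtain ⟨x, hx⟩ := adj_label h
    have hxq : x ∈ symmDiff b.1 v.1 := by
      rw [symmDiff_comm] at hx
      rw [hx]; exact Finset.mem_singleton_self x
    obtain ⟨d, hd, hdl⟩ := walk_parity q hxq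
    obtain ⟨y, hy⟩ := Finset.card_eq_one.1 (dlabel_card d)
    have hxy : dlabel d = {x} := by
      rw [hy] at hdl ⊢; rw [Finset.mem_singleton] at hdl; rw [hdl]
    have := hinj v.1 b.1 d.fst.1 d.snd.1 v.2 b.2 d.fst.2 d.snd.2 (by exact h)
      (by rw [hx, ← hxy]; rfl)
    have hedge : d.edge = s(v, b) := by
      rcases this with ⟨h1, h2⟩ | ⟨h1, h2⟩
      · have e : d.toProd = (v, b) := Prod.ext (Subtype.ext h1.symm) (Subtype.ext h2.symm)
        rw [SimpleGraph.Dart.edge, e]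
      · have e : d.toProd = (b, v) := Prod.ext (Subtype.ext h2.symm) (Subtype.ext h1.symm)
        rw [SimpleGraph.Dart.edge, e]
        exact Sym2.eq_swap
    apply hvb
    rw [← hedge]
    exact List.mem_map_of_mem (f := SimpleGraph.Dart.edge) hd

lemma path_length_eq (hinj : clInj T) {u v : T} (p : ((cubeGraph m).induce T).Walk u v)
    (hp : p.IsPath) : p.length = hdist u.1 v.1 := by
  induction p with
  | nil => simp [hdist_self]
  | @cons a b c h q ih =>
    rw [SimpleGraph.Walk.cons_isPath_iff] at hp
    obtain ⟨hq, hasup⟩ := hp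
    have hql := ih hq
    obtain ⟨x, hx⟩ := adj_label h
    have hxnot : x ∉ symmDiff b.1 c.1 := by
      intro hmem
      obtain ⟨d, hd, hdl⟩ := walk_parity q hmem
      obtain ⟨y, hy⟩ := Finset.card_eq_one.1 (dlabel_card d)
      have hxy : dlabel d = {x} := by
        rw [hy] at hdl ⊢; rw [Finset.mem_singleton] at hdl; rw [hdl]
      have := hinj a.1 b.1 d.fst.1 d.snd.1 a.2 b.2 d.fst.2 d.snd.2 (by exact h)
        (by rw [hx, ← hxy]; rfl)
      rcases this with ⟨h1, _⟩ | ⟨h1, _⟩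
      · have : a = d.fst := Subtype.ext h1
        exact hasup (by rw [this]; exact SimpleGraph.Walk.dart_fst_mem_support_of_mem_darts q hd)
      · have : a = d.snd := Subtype.ext h1
        exact hasup (by rw [this]; exact SimpleGraph.Walk.dart_snd_mem_support_of_mem_darts q hd)
    have hdisj : Disjoint ({x} : Finset (Fin m)) (symmDiff b.1 c.1) :=
      Finset.disjoint_singleton_left.2 hxnot
    have hac : symmDiff a.1 c.1 = {x} ∪ symmDiff b.1 c.1 := by
      have h1 : symmDiff a.1 c.1 = symmDiff (symmDiff a.1 b.1) (symmDiff b.1 c.1) := by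
        rw [symmDiff_cancel_mid]
      rw [h1, hx, hdisj.symmDiff_eq_sup, Finset.sup_eq_union]
    have : hdist a.1 c.1 = hdist b.1 c.1 + 1 := by
      rw [hdist, hdist, hac, Finset.card_union_of_disjoint hdisj, Finset.card_singleton]
      omega
    simp only [SimpleGraph.Walk.length_cons]
    omega

lemma good_isPC (hgood : Good T) :
    ∀ u v : T, ((cubeGraph m).induce T).dist u v = (symmDiff u.1 v.1).card := by
  obtain ⟨hne, hc, hinj⟩ := hgood
  intro u v
  have hreach : ((cubeGraph m).induce T).Reachable u v := good_preconnected hc u v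
  obtain ⟨p, hp⟩ := hreach.exists_walk_length_eq_dist
  have hlow : hdist u.1 v.1 ≤ ((cubeGraph m).induce T).dist u v := hp ▸ walk_hdist_le p
  obtain ⟨q⟩ := hreach
  have hup : ((cubeGraph m).induce T).dist u v ≤ hdist u.1 v.1 := by
    have hbp := path_length_eq hinj q.bypass q.bypass_isPath
    calc ((cubeGraph m).induce T).dist u v ≤ q.bypass.length := SimpleGraph.dist_le _
      _ = hdist u.1 v.1 := hbp
  have : ((cubeGraph m).induce T).dist u v = hdist u.1 v.1 := le_antisymm hup hlow
  rw [this]; rfl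

/-- existence of a geodesic walk -/
lemma good_geodesic (hgood : Good T) {A B : Finset (Fin m)} (hA : A ∈ T) (hB : B ∈ T) :
    ∃ p : ((cubeGraph m).induce T).Walk ⟨A, hA⟩ ⟨B, hB⟩, p.length = hdist A B := by
  have hreach := good_reachable hgood.2.1 hA hB
  obtain ⟨p, hp⟩ := hreach.exists_walk_length_eq_dist
  exact ⟨p, by rw [hp, good_isPC hgood]; rfl⟩

end lemmaA

section fromTree
variable {m : ℕ} {T : Set (Finset (Fin m))}

lemma concat_isPath {u v w : T} (p : ((cubeGraph m).induce T).Walk u v)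
    (h : ((cubeGraph m).induce T).Adj v w) (hp : p.IsPath)
    (hw : w ∉ p.support) : (p.concat h).IsPath := by
  rw [← SimpleGraph.Walk.isPath_reverse_iff, SimpleGraph.Walk.reverse_concat]
  rw [SimpleGraph.Walk.cons_isPath_iff]
  exact ⟨hp.reverse, by rwa [SimpleGraph.Walk.support_reverse, List.mem_reverse]⟩

lemma pc_geodesic_path
    (hPC : ∀ u v : T, ((cubeGraph m).induce T).dist u v = (symmDiff u.1 v.1).card)
    (hconn : ((cubeGraph m).induce T).Connected)
    {C C' : Finset (Fin m)} (hC : C ∈ T) (hC' : C' ∈ T) :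
    ∃ p : ((cubeGraph m).induce T).Walk ⟨C, hC⟩ ⟨C', hC'⟩,
      p.length = hdist C C' ∧ p.IsPath := by
  obtain ⟨q, hq⟩ := (hconn.preconnected ⟨C, hC⟩ ⟨C', hC'⟩).exists_walk_length_eq_dist
  have hqd : q.length = hdist C C' := by rw [hq, hPC]; rfl
  refine ⟨q.bypass, ?_, q.bypass_isPath⟩
  have h1 : hdist C C' ≤ q.bypass.length := walk_hdist_le q.bypass
  have h2 : q.bypass.length ≤ q.length := q.length_bypass_le
  omega

/-- From an isometric tree we recover label injectivity: fixed orientation version. -/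
lemma tree_clInj_aux
    (hPC : ∀ u v : T, ((cubeGraph m).induce T).dist u v = (symmDiff u.1 v.1).card)
    (hTree : ((cubeGraph m).induce T).IsTree)
    {A B A' B' : Finset (Fin m)} (hA : A ∈ T) (hB : B ∈ T) (hA' : A' ∈ T) (hB' : B' ∈ T)
    {x : Fin m} (hAB : symmDiff A B = {x}) (hAB' : symmDiff A' B' = {x})
    (hxA : x ∉ A) (hxA' : x ∉ A') : A = A' ∧ B = B' := by
  classical
  set D := symmDiff A A' with hD
  have hxD : x ∉ D := by
    rw [hD, Finset.mem_symmDiff]; push_neg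
    exact ⟨fun h => absurd h hxA, fun h => absurd h hxA'⟩
  have hBB' : symmDiff B B' = D := by
    have h1 : symmDiff A B' = symmDiff D {x} := by
      rw [← hAB', hD, symmDiff_cancel_mid]
    have h2 : symmDiff B B' = symmDiff (symmDiff B A) (symmDiff A B') := by
      rw [symmDiff_cancel_mid]
    rw [h2, h1, symmDiff_comm B A, hAB, ← symmDiff_assoc, symmDiff_comm ({x} : Finset (Fin m)) D,
      symmDiff_assoc, symmDiff_self, symmDiff_bot]
  have hAB'd : symmDiff A B' = D ∪ {x} := by
    have h1 : symmDiff A B' = symmDiff D {x} := by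
      rw [← hAB', hD, symmDiff_cancel_mid]
    rw [h1, (Finset.disjoint_singleton_right.2 hxD).symmDiff_eq_sup, Finset.sup_eq_union]
  by_cases hd0 : D.card = 0
  · have hAA' : A = A' := by
      rw [← hdist_eq_zero]; exact hd0
    refine ⟨hAA', ?_⟩
    rw [← hdist_eq_zero, hdist, hBB', hd0]
  -- main case: derive a contradiction
  exfalso
  set d := D.card with hdd
  have hdistAB' : hdist A B' = d + 1 := by
    rw [hdist, hAB'd, Finset.card_union_of_disjoint (Finset.disjoint_singleton_right.2 hxD),
      Finset.card_singleton]
  have hdistBB' : hdist B B' = d := by rw [hdist, hBB']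
  have hdistAA' : hdist A A' = d := rfl
  obtain ⟨p, hpl, hpp⟩ := pc_geodesic_path hPC hTree.isConnected hA hA'
  obtain ⟨p2, hp2l, hp2p⟩ := pc_geodesic_path hPC hTree.isConnected hB hB'
  have hadj1 : ((cubeGraph m).induce T).Adj (⟨A', hA'⟩ : T) ⟨B', hB'⟩ := by
    show (symmDiff A' B').card = 1
    rw [hAB']; exact Finset.card_singleton x
  have hadj2 : ((cubeGraph m).induce T).Adj (⟨A, hA⟩ : T) ⟨B, hB⟩ := by
    show (symmDiff A B).card = 1
    rw [hAB]; exact Finset.card_singleton x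
  -- P1 : geodesic from A to A' followed by the x-edge
  have hB'nsup : (⟨B', hB'⟩ : T) ∉ p.support := by
    intro hmem
    have := geodesic_support_btw p (by rw [hpl]) _ hmem
    have h3 := hdist_triangle (A := A) (B := B') (C := A')
    simp only [hdistAA'] at this
    omega
  have hAnsup : (⟨A, hA⟩ : T) ∉ p2.support := by
    intro hmem
    have := geodesic_support_btw p2 (by rw [hp2l]) _ hmem
    have h4 : hdist B A = 1 := by rw [hdist_comm, hdist, hAB]; exact Finset.card_singleton x
    simp only [hdistBB', h4, hdistAB'] at this
    omega
  set P1 : ((cubeGraph m).induce T).Walk ⟨A, hA⟩ ⟨B', hB'⟩ := p.concat hadj1 with hP1def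
  set P2 : ((cubeGraph m).induce T).Walk ⟨A, hA⟩ ⟨B', hB'⟩ := SimpleGraph.Walk.cons hadj2 p2
    with hP2def
  have hP1path : P1.IsPath := concat_isPath p hadj1 hpp hB'nsup
  have hP2path : P2.IsPath := by
    rw [hP2def, SimpleGraph.Walk.cons_isPath_iff]
    exact ⟨hp2p, hAnsup⟩
  have hPeq : P1 = P2 := by
    have := SimpleGraph.isAcyclic_iff_path_unique.1 hTree.IsAcyclic
      ⟨P1, hP1path⟩ ⟨P2, hP2path⟩
    exact congrArg Subtype.val this
  -- p is nonempty since d ≥ 1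
  cases p with
  | nil => simp [hdistAA'] at hpl; omega
  | @cons _ w _ hadj0 p' =>
    -- second vertex of P1 is w, of P2 is B
    have hv1 : P1.getVert 1 = w := by
      rw [hP1def, SimpleGraph.Walk.concat_cons]
      rw [show (1 : ℕ) = 0 + 1 from rfl, SimpleGraph.Walk.getVert_cons_succ,
        SimpleGraph.Walk.getVert_zero]
    have hv2 : P2.getVert 1 = (⟨B, hB⟩ : T) := by
      rw [hP2def]
      rw [show (1 : ℕ) = 0 + 1 from rfl, SimpleGraph.Walk.getVert_cons_succ,
        SimpleGraph.Walk.getVert_zero]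
    have hwB : w = (⟨B, hB⟩ : T) := by rw [← hv1, hPeq, hv2]
    -- but w is on a geodesic from A to A', so symmDiff A w ⊆ D, while symmDiff A B = {x}
    have hwsup : w ∈ (SimpleGraph.Walk.cons hadj0 p').support := by
      rw [SimpleGraph.Walk.support_cons]
      exact List.mem_cons_of_mem _ p'.start_mem_support
    have hbtw := geodesic_support_btw (SimpleGraph.Walk.cons hadj0 p') (by rw [hpl]) _ hwsup
    have hsub : symmDiff A w.1 ⊆ D := btw_symmDiff_subset hbtw
    rw [hwB] at hsub
    have : x ∈ D := hsub (by rw [hAB]; exact Finset.mem_singleton_self x)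
    exact hxD this

end fromTree

section easydir
variable {m : ℕ} {T : Set (Finset (Fin m))}

lemma tree_clInj
    (hPC : ∀ u v : T, ((cubeGraph m).induce T).dist u v = (symmDiff u.1 v.1).card)
    (hTree : ((cubeGraph m).induce T).IsTree) : clInj T := by
  intro A B A' B' hA hB hA' hB' hcard heq
  obtain ⟨x, hx⟩ := Finset.card_eq_one.1 hcard
  have hx' : symmDiff A' B' = {x} := by rw [← heq, hx]
  have hxm : x ∈ symmDiff A B := by rw [hx]; exact Finset.mem_singleton_self x
  have hxm' : x ∈ symmDiff A' B' := by rw [hx']; exact Finset.mem_singleton_self x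
  rw [Finset.mem_symmDiff] at hxm hxm'
  rcases hxm with ⟨hxA1, hxB1⟩ | ⟨hxB1, hxA1⟩
  · -- x ∈ A, x ∉ B : orient as (B, A)
    rcases hxm' with ⟨hxA2, hxB2⟩ | ⟨hxB2, hxA2⟩
    · have := tree_clInj_aux hPC hTree hB hA hB' hA'
        (by rwa [symmDiff_comm]) (by rwa [symmDiff_comm]) hxB1 hxB2
      exact Or.inl ⟨this.2, this.1⟩
    · have := tree_clInj_aux hPC hTree hB hA hA' hB'
        (by rwa [symmDiff_comm]) hx' hxB1 hxA2
      exact Or.inr ⟨this.2, this.1⟩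
  · -- x ∈ B, x ∉ A
    rcases hxm' with ⟨hxA2, hxB2⟩ | ⟨hxB2, hxA2⟩
    · have := tree_clInj_aux hPC hTree hA hB hB' hA' hx (by rwa [symmDiff_comm]) hxA1 hxB2
      exact Or.inr this
    · have := tree_clInj_aux hPC hTree hA hB hA' hB' hx hx' hxA1 hxA2
      exact Or.inl this

/-- key combinatorial consequence: an isometric tree does not shatter a pair -/
lemma tree_no_pair
    (hPC : ∀ u v : T, ((cubeGraph m).induce T).dist u v = (symmDiff u.1 v.1).card)
    (hTree : ((cubeGraph m).induce T).IsTree)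
    {i j : Fin m} (hij : i ≠ j)
    {B00 B01 B10 B11 : Finset (Fin m)}
    (h00 : B00 ∈ T) (h01 : B01 ∈ T) (h10 : B10 ∈ T) (h11 : B11 ∈ T)
    (hi00 : i ∉ B00) (hj00 : j ∉ B00)
    (hi01 : i ∉ B01) (hj01 : j ∈ B01)
    (hi10 : i ∈ B10) (hj10 : j ∉ B10)
    (hi11 : i ∈ B11) (hj11 : j ∈ B11) : False := by
  classical
  have hinj : clInj T := tree_clInj hPC hTree
  obtain ⟨p, hpl, _⟩ := pc_geodesic_path hPC hTree.isConnected h00 h10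
  obtain ⟨q, hql, _⟩ := pc_geodesic_path hPC hTree.isConnected h01 h11
  -- i flips on p
  have hip : i ∈ symmDiff B00 B10 := Finset.mem_symmDiff.2 (Or.inr ⟨hi10, hi00⟩)
  obtain ⟨d, hd, hdl⟩ := walk_parity p hip
  obtain ⟨y, hy⟩ := Finset.card_eq_one.1 (dlabel_card d)
  have hdi : dlabel d = {i} := by
    rw [hy] at hdl ⊢; rw [Finset.mem_singleton] at hdl; rw [hdl]
  -- i flips on q
  have hiq : i ∈ symmDiff B01 B11 := Finset.mem_symmDiff.2 (Or.inr ⟨hi11, hi01⟩)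
  obtain ⟨e, he, hel⟩ := walk_parity q hiq
  obtain ⟨z, hz⟩ := Finset.card_eq_one.1 (dlabel_card e)
  have hei : dlabel e = {i} := by
    rw [hz] at hel ⊢; rw [Finset.mem_singleton] at hel; rw [hel]
  -- by label injectivity d and e have the same endpoints (as sets)
  have := hinj d.fst.1 d.snd.1 e.fst.1 e.snd.1 d.fst.2 d.snd.2 e.fst.2 e.snd.2
    (by rw [hdist]; exact dlabel_card d) (by show dlabel d = dlabel e; rw [hdi, hei])
  -- X := d.fst is on p's support and on q's support
  have hdfp : d.fst ∈ p.support := SimpleGraph.Walk.dart_fst_mem_support_of_mem_darts p hd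
  have hdfq : d.fst ∈ q.support := by
    rcases this with ⟨h1, _⟩ | ⟨h1, _⟩
    · rw [show d.fst = e.fst from Subtype.ext h1]
      exact SimpleGraph.Walk.dart_fst_mem_support_of_mem_darts q he
    · rw [show d.fst = e.snd from Subtype.ext h1]
      exact SimpleGraph.Walk.dart_snd_mem_support_of_mem_darts q he
  -- along p, j never flips, so j ∉ d.fst
  have hjp : j ∉ d.fst.1 := by
    have hbtw := geodesic_support_btw p (by rw [hpl]) _ hdfp
    have hsub : symmDiff B00 d.fst.1 ⊆ symmDiff B00 B10 := btw_symmDiff_subset hbtw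
    intro hjX
    have : j ∈ symmDiff B00 d.fst.1 := Finset.mem_symmDiff.2 (Or.inr ⟨hjX, hj00⟩)
    have := hsub this
    rw [Finset.mem_symmDiff] at this
    rcases this with ⟨h1, _⟩ | ⟨h1, _⟩
    · exact hj00 h1
    · exact hj10 h1
  -- along q, j never flips, so j ∈ d.fst
  have hjq : j ∈ d.fst.1 := by
    have hbtw := geodesic_support_btw q (by rw [hql]) _ hdfq
    have hsub : symmDiff B01 d.fst.1 ⊆ symmDiff B01 B11 := btw_symmDiff_subset hbtw
    by_contra hjX
    have : j ∈ symmDiff B01 d.fst.1 := Finset.mem_symmDiff.2 (Or.inl ⟨hj01, hjX⟩)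
    have := hsub this
    rw [Finset.mem_symmDiff] at this
    rcases this with ⟨_, h2⟩ | ⟨_, h2⟩
    · exact h2 hj11
    · exact h2 hj01
  exact hjp hjq

end easydir

section hulls
variable {m : ℕ}

def vary (X : Set (Finset (Fin m))) (j : Fin m) : Prop :=
  (∃ B ∈ X, j ∈ B) ∧ (∃ B ∈ X, j ∉ B)

def btwSet (T X : Set (Finset (Fin m))) : Set (Finset (Fin m)) :=
  {y | y ∈ T ∧ ∃ u ∈ X, ∃ v ∈ X, hdist u y + hdist y v = hdist u v}

lemma btwSet_subset {T X : Set (Finset (Fin m))} : btwSet T X ⊆ T := fun _ h => h.1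

lemma subset_btwSet {T X : Set (Finset (Fin m))} (hXT : X ⊆ T) : X ⊆ btwSet T X :=
  fun y hy => ⟨hXT hy, y, hy, y, hy, by simp [hdist_self]⟩

lemma btwSet_vary {T X : Set (Finset (Fin m))} {y : Finset (Fin m)} (hy : y ∈ btwSet T X)
    {u : Finset (Fin m)} (hu : u ∈ X) {j : Fin m} (hj : j ∈ symmDiff u y) : vary X j := by
  obtain ⟨-, u', hu', v', hv', hbtw⟩ := hy
  by_cases huu' : j ∈ symmDiff u u'
  · rw [Finset.mem_symmDiff] at huu'
    rcases huu' with ⟨h1, h2⟩ | ⟨h1, h2⟩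
    · exact ⟨⟨u, hu, h1⟩, ⟨u', hu', h2⟩⟩
    · exact ⟨⟨u', hu', h1⟩, ⟨u, hu, h2⟩⟩
  · have hj' : j ∈ symmDiff u' y := by
      have : j ∈ symmDiff (symmDiff u u') (symmDiff u' y) := by
        rw [symmDiff_cancel_mid]; exact hj
      rw [Finset.mem_symmDiff] at this
      rcases this with ⟨h1, _⟩ | ⟨h1, _⟩
      · exact absurd h1 huu'
      · exact h1
    have hsub : symmDiff u' y ⊆ symmDiff u' v' := btw_symmDiff_subset hbtw
    have := hsub hj'
    rw [Finset.mem_symmDiff] at this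
    rcases this with ⟨h1, h2⟩ | ⟨h1, h2⟩
    · exact ⟨⟨u', hu', h1⟩, ⟨v', hv', h2⟩⟩
    · exact ⟨⟨v', hv', h1⟩, ⟨u', hu', h2⟩⟩

lemma btwSet_unique {T X0 X1 : Set (Finset (Fin m))}
    (hD : ∀ j, ¬ (vary X0 j ∧ vary X1 j))
    {u0 u1 : Finset (Fin m)} (hu0 : u0 ∈ X0) (hu1 : u1 ∈ X1)
    {y y' : Finset (Fin m)}
    (hy0 : y ∈ btwSet T X0) (hy1 : y ∈ btwSet T X1)
    (hy0' : y' ∈ btwSet T X0) (hy1' : y' ∈ btwSet T X1) : y = y' := by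
  classical
  by_contra hne
  have : (symmDiff y y').Nonempty := by
    rw [Finset.nonempty_iff_ne_empty]
    intro h
    rw [← Finset.bot_eq_empty, symmDiff_eq_bot] at h
    exact hne h
  obtain ⟨j, hj⟩ := this
  have hv0 : vary X0 j := by
    have : j ∈ symmDiff y u0 ∨ j ∈ symmDiff u0 y' := by
      have htr : symmDiff y y' ⊆ symmDiff y u0 ∪ symmDiff u0 y' := by
        have := symmDiff_triangle y u0 y'
        simpa [Finset.sup_eq_union] using this
      exact Finset.mem_union.1 (htr hj)
    rcases this with h | h
    · exact btwSet_vary hy0 hu0 (by rwa [symmDiff_comm] at h)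
    · exact btwSet_vary hy0' hu0 h
  have hv1 : vary X1 j := by
    have : j ∈ symmDiff y u1 ∨ j ∈ symmDiff u1 y' := by
      have htr : symmDiff y y' ⊆ symmDiff y u1 ∪ symmDiff u1 y' := by
        have := symmDiff_triangle y u1 y'
        simpa [Finset.sup_eq_union] using this
      exact Finset.mem_union.1 (htr hj)
    rcases this with h | h
    · exact btwSet_vary hy1 hu1 (by rwa [symmDiff_comm] at h)
    · exact btwSet_vary hy1' hu1 h
  exact hD j ⟨hv0, hv1⟩

lemma walk_to_chain {T : Set (Finset (Fin m))} {a b : T}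
    (p : ((cubeGraph m).induce T).Walk a b) (hlen : p.length = hdist a.1 b.1) :
    Relation.ReflTransGen
      (fun x y => cstep T x y ∧
        (hdist a.1 x + hdist x b.1 = hdist a.1 b.1) ∧
        (hdist a.1 y + hdist y b.1 = hdist a.1 b.1)) a.1 b.1 := by
  induction p with
  | nil => exact Relation.ReflTransGen.refl
  | @cons a c b h q ih =>
    have h1 : hdist a.1 c.1 = 1 := h
    simp only [SimpleGraph.Walk.length_cons] at hlen
    have hq : q.length = hdist c.1 b.1 := by
      have hle := walk_hdist_le q
      have t1 := hdist_triangle (A := a.1) (B := c.1) (C := b.1)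
      have t2 := hdist_triangle (A := c.1) (B := a.1) (C := b.1)
      rw [hdist_comm (A := c.1) (B := a.1)] at t2
      omega
    have hab : hdist a.1 b.1 = 1 + hdist c.1 b.1 := by
      have hle := walk_hdist_le q
      have t1 := hdist_triangle (A := a.1) (B := c.1) (C := b.1)
      have t2 := hdist_triangle (A := c.1) (B := a.1) (C := b.1)
      rw [hdist_comm (A := c.1) (B := a.1)] at t2
      omega
    have hchain := ih hq
    have hchain' : Relation.ReflTransGen
        (fun x y => cstep T x y ∧
          (hdist a.1 x + hdist x b.1 = hdist a.1 b.1) ∧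
          (hdist a.1 y + hdist y b.1 = hdist a.1 b.1)) c.1 b.1 := by
      refine Relation.ReflTransGen.mono ?_ _ _ hchain
      rintro x y ⟨hst, hbx, hby⟩
      refine ⟨hst, ?_, ?_⟩
      · have t1 := hdist_triangle (A := a.1) (B := c.1) (C := x)
        have t2 := hdist_triangle (A := a.1) (B := x) (C := b.1)
        omega
      · have t1 := hdist_triangle (A := a.1) (B := c.1) (C := y)
        have t2 := hdist_triangle (A := a.1) (B := y) (C := b.1)
        omega
    refine Relation.ReflTransGen.head ?_ hchain'
    refine ⟨⟨a.2, c.2, h1⟩, ?_, ?_⟩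
    · simp [hdist_self]
    · omega

/-- Lemma K: geodesic chains whose vertices stay metrically between the endpoints. -/
lemma geodesic_chain {T : Set (Finset (Fin m))} (hgood : Good T)
    {u v : Finset (Fin m)} (hu : u ∈ T) (hv : v ∈ T) :
    Relation.ReflTransGen
      (fun a b => cstep T a b ∧
        (hdist u a + hdist a v = hdist u v) ∧
        (hdist u b + hdist b v = hdist u v)) u v := by
  obtain ⟨p, hpl⟩ := good_geodesic hgood hu hv
  exact walk_to_chain p hpl

end hulls

section connlemmas
variable {m : ℕ}

lemma rtg_symm {T : Set (Finset (Fin m))} {a b : Finset (Fin m)}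
    (h : Relation.ReflTransGen (cstep T) a b) : Relation.ReflTransGen (cstep T) b a :=
  by haveI : Std.Symm (cstep T) := ⟨fun _ _ h => cstep_symm h⟩; exact Std.Symm.symm _ _ h

lemma btwSet_chain_from_witness {T X : Set (Finset (Fin m))} (hgood : Good T) (hXT : X ⊆ T)
    {u y v : Finset (Fin m)} (hu : u ∈ X) (hv : v ∈ X) (hyT : y ∈ T)
    (hbtw : hdist u y + hdist y v = hdist u v) :
    Relation.ReflTransGen (cstep (btwSet T X)) u y := by
  have hchain := geodesic_chain hgood (hXT hu) hyT
  refine Relation.ReflTransGen.mono ?_ _ _ hchain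
  rintro x z ⟨⟨hx, hz, hd⟩, hbx, hbz⟩
  refine ⟨⟨hx, ?_⟩, ⟨hz, ?_⟩, hd⟩
  · exact ⟨u, hu, v, hv, btw_trans hbx hbtw⟩
  · exact ⟨u, hu, v, hv, btw_trans hbz hbtw⟩

lemma cconn_btwSet {T X : Set (Finset (Fin m))} (hgood : Good T) (hXT : X ⊆ T) :
    cconn (btwSet T X) := by
  intro a ha b hb
  obtain ⟨haT, ua, hua, va, hva, hba⟩ := ha
  obtain ⟨hbT, ub, hub, vb, hvb, hbb⟩ := hb
  have h1 : Relation.ReflTransGen (cstep (btwSet T X)) ua a :=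
    btwSet_chain_from_witness hgood hXT hua hva haT hba
  have h2 : Relation.ReflTransGen (cstep (btwSet T X)) ub b :=
    btwSet_chain_from_witness hgood hXT hub hvb hbT hbb
  have h3 : Relation.ReflTransGen (cstep (btwSet T X)) ua ub := by
    have hchain := geodesic_chain hgood (hXT hua) (hXT hub)
    refine Relation.ReflTransGen.mono ?_ _ _ hchain
    rintro x z ⟨⟨hx, hz, hd⟩, hbx, hbz⟩
    exact ⟨⟨hx, ua, hua, ub, hub, hbx⟩, ⟨hz, ua, hua, ub, hub, hbz⟩, hd⟩
  exact ((rtg_symm h1).trans h3).trans h2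

lemma cconn_union {P Q : Set (Finset (Fin m))} (hP : cconn P) (hQ : cconn Q)
    {x : Finset (Fin m)} (hxP : x ∈ P) (hxQ : x ∈ Q) : cconn (P ∪ Q) := by
  have hlift : ∀ a ∈ P ∪ Q, Relation.ReflTransGen (cstep (P ∪ Q)) a x := by
    rintro a (ha | ha)
    · exact Relation.ReflTransGen.mono (fun _ _ h => cstep_mono Set.subset_union_left h)
        _ _ (rtg_symm (Relation.ReflTransGen.mono (fun _ _ h => h) _ _ (hP x hxP a ha)))
    · exact Relation.ReflTransGen.mono (fun _ _ h => cstep_mono Set.subset_union_right h)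
        _ _ (rtg_symm (hQ x hxQ a ha))
  intro a ha b hb
  exact (hlift a ha).trans (rtg_symm (hlift b hb))

lemma cconn_insert {P : Set (Finset (Fin m))} (hP : cconn P)
    {c b : Finset (Fin m)} (hc : c ∈ P) (hcb : hdist c b = 1) : cconn (insert b P) := by
  have hlift : ∀ a ∈ insert b P, Relation.ReflTransGen (cstep (insert b P)) a c := by
    rintro a (rfl | ha)
    · exact Relation.ReflTransGen.single
        ⟨Set.mem_insert _ _, Set.mem_insert_of_mem _ hc, by rwa [hdist_comm]⟩
    · exact Relation.ReflTransGen.mono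
        (fun _ _ h => cstep_mono (Set.subset_insert _ _) h) _ _ (rtg_symm (hP c hc a ha))
  intro a ha b' hb'
  exact (hlift a ha).trans (rtg_symm (hlift b' hb'))

end connlemmas

section liftlemmas
variable {m : ℕ} {i : Fin m}

lemma symmDiff_insert_both {a b : Finset (Fin m)} (ha : i ∉ a) (hb : i ∉ b) :
    symmDiff (insert i a) (insert i b) = symmDiff a b := by
  ext x
  by_cases hxi : x = i
  · subst hxi
    simp [Finset.mem_symmDiff, ha, hb]
  · simp [Finset.mem_symmDiff, Finset.mem_insert, hxi]

lemma symmDiff_insert_right {a b : Finset (Fin m)} (ha : i ∉ a) (hb : i ∉ b) :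
    symmDiff a (insert i b) = insert i (symmDiff a b) := by
  ext x
  by_cases hxi : x = i
  · subst hxi
    simp [Finset.mem_symmDiff, ha, hb]
  · simp [Finset.mem_symmDiff, Finset.mem_insert, hxi]

lemma hdist_insert_both {a b : Finset (Fin m)} (ha : i ∉ a) (hb : i ∉ b) :
    hdist (insert i a) (insert i b) = hdist a b := by
  rw [hdist, hdist, symmDiff_insert_both ha hb]

lemma i_not_mem_symmDiff {a b : Finset (Fin m)} (ha : i ∉ a) (hb : i ∉ b) :
    i ∉ symmDiff a b := by
  rw [Finset.mem_symmDiff]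
  push_neg
  exact ⟨fun h => absurd h ha, fun h => absurd h hb⟩

lemma hdist_insert_right {a b : Finset (Fin m)} (ha : i ∉ a) (hb : i ∉ b) :
    hdist a (insert i b) = hdist a b + 1 := by
  rw [hdist, hdist, symmDiff_insert_right ha hb,
    Finset.card_insert_of_notMem (i_not_mem_symmDiff ha hb)]

lemma hdist_self_insert {b : Finset (Fin m)} (hb : i ∉ b) :
    hdist b (insert i b) = 1 := by
  rw [hdist_insert_right hb hb, hdist_self]

lemma insert_inj_of_not_mem {a b : Finset (Fin m)} (ha : i ∉ a) (hb : i ∉ b)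
    (h : insert i a = insert i b) : a = b := by
  have := congrArg (fun s => Finset.erase s i) h
  simpa [Finset.erase_insert ha, Finset.erase_insert hb] using this

lemma lift_chain {P : Set (Finset (Fin m))} {S' : Finset (Fin m)} (hi : i ∉ S')
    (hbd : ∀ B ∈ P, B ⊆ S') {a b : Finset (Fin m)}
    (h : Relation.ReflTransGen (cstep P) a b) :
    Relation.ReflTransGen (cstep ((insert i) '' P)) (insert i a) (insert i b) := by
  induction h with
  | refl => exact Relation.ReflTransGen.refl
  | @tail x y hax hxy ih =>
    obtain ⟨hx, hy, hd⟩ := hxy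
    refine ih.tail ⟨⟨x, hx, rfl⟩, ⟨y, hy, rfl⟩, ?_⟩
    rw [hdist_insert_both (fun hc => hi (hbd x hx hc)) (fun hc => hi (hbd y hy hc))]
    exact hd

end liftlemmas

section glue
variable {m : ℕ} {i : Fin m} {S' : Finset (Fin m)}
variable {T A0 A1 : Set (Finset (Fin m))} {B0 : Finset (Fin m)}

lemma symmDiff_self_insert {b : Finset (Fin m)} (hb : i ∉ b) :
    symmDiff b (insert i b) = {i} := by
  rw [symmDiff_insert_right hb hb, symmDiff_self]
  rfl

lemma glue_edge (hi : i ∉ S') (hbdT : ∀ B ∈ T, B ⊆ S')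
    (h0T : A0 ⊆ T) (h1T : A1 ⊆ T) (hint : A0 ∩ A1 = {B0})
    {A B : Finset (Fin m)} (hA : A ∈ A0 ∪ (insert i) '' A1) (hB : B ∈ A0 ∪ (insert i) '' A1)
    (hd : hdist A B = 1) :
    (A ∈ A0 ∧ B ∈ A0) ∨
    (∃ a, a ∈ A1 ∧ ∃ b, b ∈ A1 ∧ A = insert i a ∧ B = insert i b ∧ hdist a b = 1 ∧
      symmDiff A B = symmDiff a b) ∨
    (A = B0 ∧ B = insert i B0) ∨ (A = insert i B0 ∧ B = B0) := by
  have hni : ∀ C ∈ T, i ∉ C := fun C hC hc => hi (hbdT C hC hc)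
  rcases hA with hA0 | ⟨a, ha1, rfl⟩
  · rcases hB with hB0 | ⟨b, hb1, rfl⟩
    · exact Or.inl ⟨hA0, hB0⟩
    · -- cross edge
      have hiA : i ∉ A := hni A (h0T hA0)
      have hib : i ∉ b := hni b (h1T hb1)
      have : hdist A b + 1 = 1 := by rw [← hdist_insert_right hiA hib]; exact hd
      have hAb : A = b := by
        have h0 : hdist A b = 0 := by omega
        rwa [hdist_eq_zero] at h0
      have hAB0 : A = B0 := by
        have : A ∈ A0 ∩ A1 := ⟨hA0, hAb ▸ hb1⟩
        rw [hint] at this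
        exact this
      exact Or.inr (Or.inr (Or.inl ⟨hAB0, by rw [← hAb, hAB0]⟩))
  · rcases hB with hB0 | ⟨b, hb1, rfl⟩
    · have hiB : i ∉ B := hni B (h0T hB0)
      have hia : i ∉ a := hni a (h1T ha1)
      have : hdist B a + 1 = 1 := by
        rw [← hdist_insert_right hiB hia, hdist_comm]; exact hd
      have hBa : B = a := by
        have h0 : hdist B a = 0 := by omega
        rwa [hdist_eq_zero] at h0
      have hBB0 : B = B0 := by
        have : B ∈ A0 ∩ A1 := ⟨hB0, hBa ▸ ha1⟩
        rw [hint] at this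
        exact this
      exact Or.inr (Or.inr (Or.inr ⟨by rw [← hBa, hBB0], hBB0⟩))
    · have hia : i ∉ a := hni a (h1T ha1)
      have hib : i ∉ b := hni b (h1T hb1)
      refine Or.inr (Or.inl ⟨a, ha1, b, hb1, rfl, rfl, ?_, symmDiff_insert_both hia hib⟩)
      rw [← hdist_insert_both hia hib]
      exact hd

lemma glue_good (hi : i ∉ S') (hbdT : ∀ B ∈ T, B ⊆ S') (hinj : clInj T)
    (h0T : A0 ⊆ T) (h1T : A1 ⊆ T) (hc0 : cconn A0) (hc1 : cconn A1)
    (hint : A0 ∩ A1 = {B0}) :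
    Good (A0 ∪ (insert i) '' A1) ∧ (∀ B ∈ A0 ∪ (insert i) '' A1, B ⊆ insert i S') := by
  have hni : ∀ C ∈ T, i ∉ C := fun C hC hc => hi (hbdT C hC hc)
  have hB0mem : B0 ∈ A0 ∩ A1 := by rw [hint]; rfl
  have hB00 : B0 ∈ A0 := hB0mem.1
  have hB01 : B0 ∈ A1 := hB0mem.2
  have hiB0 : i ∉ B0 := hni B0 (h0T hB00)
  set L := A0 ∪ (insert i) '' A1 with hL
  have hbound : ∀ B ∈ L, B ⊆ insert i S' := by
    rintro B (hB | ⟨b, hb, rfl⟩)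
    · exact (hbdT B (h0T hB)).trans (Finset.subset_insert _ _)
    · exact Finset.insert_subset_insert i (hbdT b (h1T hb))
  refine ⟨⟨⟨B0, Or.inl hB00⟩, ?_, ?_⟩, hbound⟩
  · -- connectivity
    have hhub : ∀ z ∈ L, Relation.ReflTransGen (cstep L) z B0 := by
      rintro z (hz | ⟨a, ha, rfl⟩)
      · exact Relation.ReflTransGen.mono
          (fun _ _ h => cstep_mono Set.subset_union_left h) _ _ (hc0 z hz B0 hB00)
      · have hch := lift_chain hi (fun B hB => hbdT B (h1T hB)) (hc1 a ha B0 hB01)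
        have hch' := Relation.ReflTransGen.mono
          (fun _ _ h => cstep_mono (Set.subset_union_right (s := A0)) h) _ _ hch
        refine hch'.tail ⟨Or.inr ⟨B0, hB01, rfl⟩, Or.inl hB00, ?_⟩
        rw [hdist_comm]
        exact hdist_self_insert hiB0
    intro a ha b hb
    exact (hhub a ha).trans (rtg_symm (hhub b hb))
  · -- label injectivity
    intro A B A' B' hA hB hA' hB' hd heq
    have hd' : hdist A' B' = 1 := by rw [hdist, ← heq]; exact hd
    have hcase1 := glue_edge hi hbdT h0T h1T hint hA hB hd
    have hcase2 := glue_edge hi hbdT h0T h1T hint hA' hB' hd'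
    have hcrosslabel : symmDiff B0 (insert i B0) = {i} := symmDiff_self_insert hiB0
    rcases hcase1 with ⟨hA0, hB0'⟩ | ⟨a, ha1, b, hb1, hEa, hEb, hdab, hlab⟩ |
      ⟨hE1, hE2⟩ | ⟨hE1, hE2⟩
    · -- edge 1 inside A0
      have hiAB : i ∉ symmDiff A B := i_not_mem_symmDiff (hni A (h0T hA0)) (hni B (h0T hB0'))
      rcases hcase2 with ⟨hA0', hB0''⟩ | ⟨a', ha1', b', hb1', hFa, hFb, hdab', hlab'⟩ |
        ⟨hF1, hF2⟩ | ⟨hF1, hF2⟩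
      · exact hinj A B A' B' (h0T hA0) (h0T hB0') (h0T hA0') (h0T hB0'') hd heq
      · exfalso
        have := hinj A B a' b' (h0T hA0) (h0T hB0') (h1T ha1') (h1T hb1') hd
          (by rw [heq, hlab'])
        rcases this with ⟨e1, e2⟩ | ⟨e1, e2⟩
        · have f1 : A = B0 := by
            have : A ∈ A0 ∩ A1 := ⟨hA0, e1 ▸ ha1'⟩; rwa [hint] at this
          have f2 : B = B0 := by
            have : B ∈ A0 ∩ A1 := ⟨hB0', e2 ▸ hb1'⟩; rwa [hint] at this
          rw [f1, f2, hdist_self] at hd; omega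
        · have f1 : A = B0 := by
            have : A ∈ A0 ∩ A1 := ⟨hA0, e1 ▸ hb1'⟩; rwa [hint] at this
          have f2 : B = B0 := by
            have : B ∈ A0 ∩ A1 := ⟨hB0', e2 ▸ ha1'⟩; rwa [hint] at this
          rw [f1, f2, hdist_self] at hd; omega
      · exfalso
        apply hiAB
        rw [heq, hF1, hF2, hcrosslabel]
        exact Finset.mem_singleton_self i
      · exfalso
        apply hiAB
        rw [heq, hF1, hF2, symmDiff_comm, hcrosslabel]
        exact Finset.mem_singleton_self i
    · -- edge 1 is a lifted edge
      have hiAB : i ∉ symmDiff A B := by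
        rw [hlab]
        exact i_not_mem_symmDiff (hni a (h1T ha1)) (hni b (h1T hb1))
      rcases hcase2 with ⟨hA0', hB0''⟩ | ⟨a', ha1', b', hb1', hFa, hFb, hdab', hlab'⟩ |
        ⟨hF1, hF2⟩ | ⟨hF1, hF2⟩
      · exfalso
        have := hinj a b A' B' (h1T ha1) (h1T hb1) (h0T hA0') (h0T hB0'') hdab
          (by rw [← hlab, heq])
        rcases this with ⟨e1, e2⟩ | ⟨e1, e2⟩
        · have f1 : a = B0 := by
            have : a ∈ A0 ∩ A1 := ⟨e1 ▸ hA0', ha1⟩; rwa [hint] at this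
          have f2 : b = B0 := by
            have : b ∈ A0 ∩ A1 := ⟨e2 ▸ hB0'', hb1⟩; rwa [hint] at this
          rw [f1, f2, hdist_self] at hdab; omega
        · have f1 : a = B0 := by
            have : a ∈ A0 ∩ A1 := ⟨e1 ▸ hB0'', ha1⟩; rwa [hint] at this
          have f2 : b = B0 := by
            have : b ∈ A0 ∩ A1 := ⟨e2 ▸ hA0', hb1⟩; rwa [hint] at this
          rw [f1, f2, hdist_self] at hdab; omega
      · have := hinj a b a' b' (h1T ha1) (h1T hb1) (h1T ha1') (h1T hb1') hdab
          (by rw [← hlab, heq, hlab'])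
        rcases this with ⟨e1, e2⟩ | ⟨e1, e2⟩
        · exact Or.inl ⟨by rw [hEa, hFa, e1], by rw [hEb, hFb, e2]⟩
        · exact Or.inr ⟨by rw [hEa, hFb, e1], by rw [hEb, hFa, e2]⟩
      · exfalso
        apply hiAB
        rw [heq, hF1, hF2, hcrosslabel]
        exact Finset.mem_singleton_self i
      · exfalso
        apply hiAB
        rw [heq, hF1, hF2, symmDiff_comm, hcrosslabel]
        exact Finset.mem_singleton_self i
    · -- edge 1 is the cross edge B0 → insert i B0
      have hlab1 : symmDiff A B = {i} := by rw [hE1, hE2]; exact hcrosslabel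
      rcases hcase2 with ⟨hA0', hB0''⟩ | ⟨a', ha1', b', hb1', hFa, hFb, hdab', hlab'⟩ |
        ⟨hF1, hF2⟩ | ⟨hF1, hF2⟩
      · exfalso
        have hiAB : i ∉ symmDiff A' B' :=
          i_not_mem_symmDiff (hni A' (h0T hA0')) (hni B' (h0T hB0''))
        exact hiAB (by rw [← heq, hlab1]; exact Finset.mem_singleton_self i)
      · exfalso
        have hiAB : i ∉ symmDiff A' B' := by
          rw [hlab']
          exact i_not_mem_symmDiff (hni a' (h1T ha1')) (hni b' (h1T hb1'))
        exact hiAB (by rw [← heq, hlab1]; exact Finset.mem_singleton_self i)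
      · exact Or.inl ⟨by rw [hE1, hF1], by rw [hE2, hF2]⟩
      · exact Or.inr ⟨by rw [hE1, hF2], by rw [hE2, hF1]⟩
    · -- edge 1 is the reversed cross edge
      have hlab1 : symmDiff A B = {i} := by
        rw [hE1, hE2, symmDiff_comm]; exact hcrosslabel
      rcases hcase2 with ⟨hA0', hB0''⟩ | ⟨a', ha1', b', hb1', hFa, hFb, hdab', hlab'⟩ |
        ⟨hF1, hF2⟩ | ⟨hF1, hF2⟩
      · exfalso
        have hiAB : i ∉ symmDiff A' B' :=
          i_not_mem_symmDiff (hni A' (h0T hA0')) (hni B' (h0T hB0''))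
        exact hiAB (by rw [← heq, hlab1]; exact Finset.mem_singleton_self i)
      · exfalso
        have hiAB : i ∉ symmDiff A' B' := by
          rw [hlab']
          exact i_not_mem_symmDiff (hni a' (h1T ha1')) (hni b' (h1T hb1'))
        exact hiAB (by rw [← heq, hlab1]; exact Finset.mem_singleton_self i)
      · exact Or.inr ⟨by rw [hE1, hF2], by rw [hE2, hF1]⟩
      · exact Or.inl ⟨by rw [hE1, hF1], by rw [hE2, hF2]⟩

end glue

section exitlemma
variable {m : ℕ}

lemma cconn_singleton {w : Finset (Fin m)} : cconn {w} := by
  intro A hA B hB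
  rw [Set.mem_singleton_iff] at hA hB
  subst hA; subst hB
  exact Relation.ReflTransGen.refl

lemma exit_lemma {T A1 : Set (Finset (Fin m))} (hA1T : A1 ⊆ T)
    {u0 w : Finset (Fin m)} (hu0T : u0 ∈ T) (hu0n : u0 ∉ A1) (hw : w ∈ A1)
    (hconn : cconn T) :
    ∃ C : Set (Finset (Fin m)), u0 ∈ C ∧ C ⊆ T ∧ (∀ z ∈ C, z ∉ A1) ∧ cconn C ∧
      ∃ c ∈ C, ∃ b ∈ A1, hdist c b = 1 := by
  classical
  set C : Set (Finset (Fin m)) :=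
    {z | Relation.ReflTransGen (cstep (T \ A1)) u0 z} with hC
  have hu0C : u0 ∈ C := Relation.ReflTransGen.refl
  have hCsub : ∀ z ∈ C, z ∈ T ∧ z ∉ A1 := by
    intro z hz
    induction hz with
    | refl => exact ⟨hu0T, hu0n⟩
    | @tail y z' huy hyz ih => exact ⟨hyz.2.1.1, hyz.2.1.2⟩
  have hCconn : cconn C := by
    have hhub : ∀ z ∈ C, Relation.ReflTransGen (cstep C) u0 z := by
      intro z hz
      induction hz with
      | refl => exact Relation.ReflTransGen.refl
      | @tail y z' huy hyz ih =>
        exact ih.tail ⟨huy, huy.tail hyz, hyz.2.2⟩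
    intro a ha b hb
    exact (rtg_symm (hhub a ha)).trans (hhub b hb)
  refine ⟨C, hu0C, fun z hz => (hCsub z hz).1, fun z hz => (hCsub z hz).2, hCconn, ?_⟩
  -- first exit along a chain from u0 to w
  have hchain := hconn u0 hu0T w (hA1T hw)
  clear hC
  suffices haux : ∀ u, Relation.ReflTransGen (cstep T) u w → u ∈ C →
      ∃ c ∈ C, ∃ b ∈ A1, hdist c b = 1 from haux u0 hchain hu0C
  intro u hch
  induction hch using Relation.ReflTransGen.head_induction_on with
  | refl => exact fun huC => absurd hw ((hCsub _ huC).2)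
  | @head u u1 hst hrest ih =>
    intro huC
    by_cases h1 : u1 ∈ A1
    · exact ⟨u, huC, u1, h1, hst.2.2⟩
    · have hu1C : u1 ∈ C :=
        Relation.ReflTransGen.tail huC
          ⟨⟨(hCsub u huC).1, (hCsub u huC).2⟩, ⟨hst.2.1, h1⟩, hst.2.2⟩
      exact ih hu1C

end exitlemma

section mainlemma
variable {m : ℕ}

lemma inter_pair_eq {B Z : Finset (Fin m)} {i j : Fin m} (hZ : Z ⊆ {i, j})
    (hi : i ∈ B ↔ i ∈ Z) (hj : j ∈ B ↔ j ∈ Z) : B ∩ ({i, j} : Finset (Fin m)) = Z := by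
  ext x
  simp only [Finset.mem_inter, Finset.mem_insert, Finset.mem_singleton]
  constructor
  · rintro ⟨hxB, rfl | rfl⟩
    · exact hi.1 hxB
    · exact hj.1 hxB
  · intro hxZ
    have := hZ hxZ
    simp only [Finset.mem_insert, Finset.mem_singleton] at this
    rcases this with rfl | rfl
    · exact ⟨hi.2 hxZ, Or.inl rfl⟩
    · exact ⟨hj.2 hxZ, Or.inr rfl⟩

lemma main_lemma (S : Finset (Fin m)) :
    ∀ V : Set (Finset (Fin m)), (∀ B ∈ V, B ⊆ S) → VCdimLE V 1 →
      ∃ T, V ⊆ T ∧ (∀ B ∈ T, B ⊆ S) ∧ Good T := by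
  classical
  induction S using Finset.induction_on with
  | empty =>
    intro V hVS _
    refine ⟨{∅}, ?_, ?_, ⟨∅, rfl⟩, cconn_singleton, ?_⟩
    · intro B hB
      have : B ⊆ ∅ := hVS B hB
      rw [Finset.subset_empty] at this
      rw [this]; rfl
    · intro B hB
      rw [Set.mem_singleton_iff] at hB
      rw [hB]
    · intro A B A' B' hA hB _ _ hd _
      rw [Set.mem_singleton_iff] at hA hB
      rw [hA, hB, hdist_self] at hd
      omega
  | @insert i S' hiS' ih =>
    intro V hVS hVC
    set V0 : Set (Finset (Fin m)) := {B | B ∈ V ∧ i ∉ B} with hV0def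
    set V1 : Set (Finset (Fin m)) := {b | insert i b ∈ V ∧ i ∉ b} with hV1def
    have hV01S : ∀ B ∈ V0 ∪ V1, B ⊆ S' := by
      rintro B (⟨hBV, hiB⟩ | ⟨hBV, hiB⟩) <;>
      · intro x hx
        have hxi : x ∈ insert i S' := by
          first
          | exact hVS B hBV hx
          | exact hVS _ hBV (Finset.mem_insert_of_mem hx)
        rcases Finset.mem_insert.1 hxi with rfl | h
        · exact absurd hx hiB
        · exact h
    have hVC01 : VCdimLE (V0 ∪ V1) 1 := by
      intro Y hsh
      by_cases hiY : i ∈ Y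
      · exfalso
        obtain ⟨B, hB, hBY⟩ := hsh Y Finset.Subset.rfl
        have hiB : i ∈ B := by
          have : i ∈ B ∩ Y := by rw [hBY]; exact hiY
          exact (Finset.mem_inter.1 this).1
        rcases hB with ⟨_, hiB'⟩ | ⟨_, hiB'⟩ <;> exact hiB' hiB
      · apply hVC
        intro Z hZ
        obtain ⟨B, hB, hBY⟩ := hsh Z hZ
        rcases hB with ⟨hBV, _⟩ | ⟨hBV, hiB⟩
        · exact ⟨B, hBV, hBY⟩
        · refine ⟨insert i B, hBV, ?_⟩
          rw [← hBY]
          ext x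
          simp only [Finset.mem_inter, Finset.mem_insert]
          constructor
          · rintro ⟨rfl | hxB, hxY⟩
            · exact absurd hxY hiY
            · exact ⟨hxB, hxY⟩
          · rintro ⟨hxB, hxY⟩
            exact ⟨Or.inr hxB, hxY⟩
    obtain ⟨T'', hVT'', hT''S, hGood''⟩ := ih (V0 ∪ V1) hV01S hVC01
    by_cases hV1ne : V1.Nonempty
    · -- V1 nonempty
      obtain ⟨w, hwV1⟩ := hV1ne
      have hV1T : V1 ⊆ T'' := fun b hb => hVT'' (Or.inr hb)
      have hV0T : V0 ⊆ T'' := fun b hb => hVT'' (Or.inl hb)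
      set A1 := btwSet T'' V1 with hA1def
      have hA1T : A1 ⊆ T'' := btwSet_subset
      have hc1 : cconn A1 := cconn_btwSet hGood'' hV1T
      have hwA1 : w ∈ A1 := subset_btwSet hV1T hwV1
      have hVsub : ∀ (A0 : Set (Finset (Fin m))), V0 ⊆ A0 →
          V ⊆ A0 ∪ (insert i) '' A1 := by
        intro A0 hV0A0 B hBV
        by_cases hiB : i ∈ B
        · right
          refine ⟨B.erase i, ?_, Finset.insert_erase hiB⟩
          apply subset_btwSet hV1T
          constructor
          · rw [Finset.insert_erase hiB]; exact hBV
          · exact Finset.notMem_erase i B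
        · exact Or.inl (hV0A0 ⟨hBV, hiB⟩)
      by_cases hV0ne : V0.Nonempty
      · -- both nonempty
        obtain ⟨u0, hu0V0⟩ := hV0ne
        have hD : ∀ j, ¬ (vary V0 j ∧ vary V1 j) := by
          rintro j ⟨hv0, hv1⟩
          have hji : j ≠ i := by
            rintro rfl
            obtain ⟨B, hB, hjB⟩ := hv0.1
            exact hB.2 hjB
          have hij : i ≠ j := fun h => hji h.symm
          have hsh : Shatters V {i, j} := by
            intro Z hZ
            obtain ⟨Bp, hBp, hjBp⟩ := hv0.1
            obtain ⟨Bn, hBn, hjBn⟩ := hv0.2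
            obtain ⟨bp, hbp, hjbp⟩ := hv1.1
            obtain ⟨bn, hbn, hjbn⟩ := hv1.2
            by_cases hiZ : i ∈ Z <;> by_cases hjZ : j ∈ Z
            · refine ⟨insert i bp, hbp.1, inter_pair_eq hZ ?_ ?_⟩
              · simp [hiZ]
              · simp [hjZ, hjbp, hji]
            · refine ⟨insert i bn, hbn.1, inter_pair_eq hZ ?_ ?_⟩
              · simp [hiZ]
              · simp [hjZ, hjbn, hji]
            · refine ⟨Bp, hBp.1, inter_pair_eq hZ ?_ ?_⟩
              · simp [hiZ, hBp.2]
              · simp [hjZ, hjBp]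
            · refine ⟨Bn, hBn.1, inter_pair_eq hZ ?_ ?_⟩
              · simp [hiZ, hBn.2]
              · simp [hjZ, hjBn]
          have := hVC _ hsh
          rw [Finset.card_insert_of_notMem (by simp [hij]), Finset.card_singleton] at this
          omega
        by_cases hmeet : (btwSet T'' V0 ∩ A1).Nonempty
        · -- case 1 : the hulls meet in a (unique) point
          obtain ⟨y, hy0, hy1⟩ := hmeet
          have hint : btwSet T'' V0 ∩ A1 = {y} := by
            ext z
            constructor
            · rintro ⟨hz0, hz1⟩
              exact btwSet_unique hD hu0V0 hwV1 hz0 hz1 hy0 hy1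
            · rintro rfl
              exact ⟨hy0, hy1⟩
          obtain ⟨hGoodL, hbnd⟩ := glue_good hiS' hT''S hGood''.2.2 btwSet_subset hA1T
            (cconn_btwSet hGood'' hV0T) hc1 hint
          exact ⟨_, hVsub _ (subset_btwSet hV0T), hbnd, hGoodL⟩
        · -- case 2 : hulls disjoint; connect through the complement component
          have hu0T'' : u0 ∈ T'' := hV0T hu0V0
          have hu0nA1 : u0 ∉ A1 := by
            intro hc
            exact hmeet ⟨u0, subset_btwSet hV0T hu0V0, hc⟩
          obtain ⟨C, hu0C, hCT, hCdisj, hCconn, c, hcC, b, hbA1, hcb⟩ :=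
            exit_lemma hA1T hu0T'' hu0nA1 hwA1 hGood''.2.1
          set A0 : Set (Finset (Fin m)) := insert b (btwSet T'' V0 ∪ C) with hA0def
          have hA0T : A0 ⊆ T'' := by
            rintro z (rfl | hz0 | hzC)
            · exact hA1T hbA1
            · exact btwSet_subset hz0
            · exact hCT hzC
          have hc0 : cconn A0 := by
            apply cconn_insert (cconn_union (cconn_btwSet hGood'' hV0T) hCconn
              (subset_btwSet hV0T hu0V0) hu0C) (Or.inr hcC)
            exact hcb
          have hint : A0 ∩ A1 = {b} := by
            ext z
            constructor
            · rintro ⟨rfl | hz0 | hzC, hz1⟩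
              · rfl
              · exact absurd ⟨z, hz0, hz1⟩ hmeet
              · exact absurd hz1 (hCdisj z hzC)
            · rintro rfl
              exact ⟨Or.inl rfl, hbA1⟩
          obtain ⟨hGoodL, hbnd⟩ := glue_good hiS' hT''S hGood''.2.2 hA0T hA1T hc0 hc1 hint
          refine ⟨_, hVsub _ ?_, hbnd, hGoodL⟩
          exact fun z hz => Or.inr (Or.inl (subset_btwSet hV0T hz))
      · -- V0 empty : pendant vertex construction
        have hint : ({w} : Set (Finset (Fin m))) ∩ A1 = {w} := by
          ext z
          constructor
          · rintro ⟨rfl, _⟩; rfl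
          · rintro rfl; exact ⟨rfl, hwA1⟩
        obtain ⟨hGoodL, hbnd⟩ := glue_good hiS' hT''S hGood''.2.2
          (fun z hz => by rw [Set.mem_singleton_iff] at hz; rw [hz]; exact hA1T hwA1)
          hA1T cconn_singleton hc1 hint
        refine ⟨_, hVsub _ ?_, hbnd, hGoodL⟩
        intro z hz
        exact absurd ⟨z, hz⟩ hV0ne
    · -- V1 empty : T'' works
      refine ⟨T'', ?_, fun B hB => (hT''S B hB).trans (Finset.subset_insert _ _), hGood''⟩
      intro B hBV
      by_cases hiB : i ∈ B
      · exfalso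
        apply hV1ne
        exact ⟨B.erase i, by rw [Finset.insert_erase hiB]; exact hBV, Finset.notMem_erase i B⟩
      · exact hVT'' (Or.inl ⟨hBV, hiB⟩)

end mainlemma


/-- An induced subgraph of `Q_m` has VC-dimension at most 1 iff it is a virtual
isometric tree: it is contained in an isometric tree of `Q_m`. -/
theorem stmt1 (m : ℕ) (V : Set (Finset (Fin m))) :
    VCdimLE V 1 ↔
      ∃ T : Set (Finset (Fin m)), V ⊆ T ∧ IsPC T ∧
        ((cubeGraph m).induce T).IsTree := by
  constructor
  · intro hVC
    obtain ⟨T, hVT, hTS, hGood⟩ :=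
      main_lemma Finset.univ V (fun B _ => Finset.subset_univ B) hVC
    exact ⟨T, hVT, good_isPC hGood,
      ⟨good_connected hGood.1 hGood.2.1, good_acyclic hGood.2.2⟩⟩
  · rintro ⟨T, hVT, hPC, hTree⟩ Y hsh
    by_contra hcard
    push_neg at hcard
    obtain ⟨i, hiY, j, hjY, hij⟩ := Finset.one_lt_card.1 hcard
    have hmem : ∀ {B Z : Finset (Fin m)} {x : Fin m}, B ∩ Y = Z → x ∈ Y →
        (x ∈ B ↔ x ∈ Z) := by
      intro B Z x h hx
      rw [← h, Finset.mem_inter]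
      exact ⟨fun hh => ⟨hh, hx⟩, fun hh => hh.1⟩
    obtain ⟨B00, hB00, h00⟩ := hsh ∅ (Finset.empty_subset Y)
    obtain ⟨B01, hB01, h01⟩ := hsh {j} (Finset.singleton_subset_iff.2 hjY)
    obtain ⟨B10, hB10, h10⟩ := hsh {i} (Finset.singleton_subset_iff.2 hiY)
    obtain ⟨B11, hB11, h11⟩ := hsh {i, j} (Finset.insert_subset hiY
      (Finset.singleton_subset_iff.2 hjY))
    exact tree_no_pair hPC hTree hij (hVT hB00) (hVT hB01) (hVT hB10) (hVT hB11)
      (by simpa using (hmem h00 hiY)) (by simpa using (hmem h00 hjY))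
      (by simpa [hij] using (hmem h01 hiY)) (by simpa using (hmem h01 hjY))
      (by simpa using (hmem h10 hiY)) (by simpa [Ne.symm hij] using (hmem h10 hjY))
      (by simpa using (hmem h11 hiY)) (by simpa using (hmem h11 hjY))
end

section
/- Let G be an isometric subgraph of Q_m = Q(X) and let Y ⊆ X be shattered by (the vertex set of) G. Then for any subset A ⊆ Y, the subgraph G(v_A) of G induced by the vertices B of G with B ∩ Y = A is a nonempty isometric subgraph of Q_m. -/
open Finset

lemma hdist_triangle' {m : ℕ} (a b c : Finset (Fin m)) :
    hdist a c ≤ hdist a b + hdist b c := by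
  unfold hdist
  calc (symmDiff a c).card ≤ (symmDiff a b ∪ symmDiff b c).card :=
        card_le_card (symmDiff_triangle a b c)
    _ ≤ _ := card_union_le _ _

lemma hdist_le_walk_length {m : ℕ} {a b : Finset (Fin m)}
    (p : (cubeGraph m).Walk a b) : hdist a b ≤ p.length := by
  induction p with
  | nil => simp [hdist]
  | @cons u w _ h p ih =>
    calc hdist u _ ≤ hdist u w + hdist w _ := hdist_triangle' _ _ _
      _ ≤ 1 + p.length := by
          have : hdist u w = 1 := h
          omega
      _ = (SimpleGraph.Walk.cons h p).length := by
          simp [SimpleGraph.Walk.length_cons]; omega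

lemma between_inter {m : ℕ} {Y A u v x : Finset (Fin m)}
    (hu : u ∩ Y = A) (hv : v ∩ Y = A)
    (hx : hdist u x + hdist x v = hdist u v) : x ∩ Y = A := by
  have hsub : symmDiff u x ⊆ symmDiff u v := by
    have h1 : symmDiff u v ⊆ symmDiff u x ∪ symmDiff x v := symmDiff_triangle u x v
    have h2 : (symmDiff u x ∪ symmDiff x v).card ≤ (symmDiff u v).card := by
      calc (symmDiff u x ∪ symmDiff x v).card ≤ (symmDiff u x).card + (symmDiff x v).card :=
            card_union_le _ _
        _ = (symmDiff u v).card := hx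
    have heq := eq_of_subset_of_card_le h1 h2
    rw [heq]
    exact subset_union_left
  have key : ∀ i ∈ Y, (i ∈ x ↔ i ∈ u) := by
    intro i hiY
    have hiuv : i ∉ symmDiff u v := by
      intro hmem
      rw [Finset.mem_symmDiff] at hmem
      have hu' : i ∈ u ↔ i ∈ A := by
        constructor
        · intro h; rw [← hu]; exact mem_inter.2 ⟨h, hiY⟩
        · intro h; rw [← hu] at h; exact (mem_inter.1 h).1
      have hv' : i ∈ v ↔ i ∈ A := by
        constructor
        · intro h; rw [← hv]; exact mem_inter.2 ⟨h, hiY⟩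
        · intro h; rw [← hv] at h; exact (mem_inter.1 h).1
      rcases hmem with ⟨h1, h2⟩ | ⟨h1, h2⟩
      · exact h2 (hv'.2 (hu'.1 h1))
      · exact h2 (hu'.2 (hv'.1 h1))
    have hiux : i ∉ symmDiff u x := fun h => hiuv (hsub h)
    rw [Finset.mem_symmDiff] at hiux
    push_neg at hiux
    exact ⟨fun h => hiux.2 h, fun h => hiux.1 h⟩
  ext i
  rw [mem_inter, ← hu, mem_inter]
  constructor
  · rintro ⟨h1, h2⟩; exact ⟨(key i h2).1 h1, h2⟩
  · rintro ⟨h1, h2⟩; exact ⟨(key i h2).2 h1, h2⟩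

lemma walk_restrict {α : Type*} {G : SimpleGraph α} {S T : Set α} :
    ∀ {u v : T} (p : (G.induce T).Walk u v)
      (hp : ∀ x ∈ p.support, x.1 ∈ S),
    ∃ q : (G.induce S).Walk ⟨u.1, hp u p.start_mem_support⟩ ⟨v.1, hp v p.end_mem_support⟩,
      q.length = p.length := by
  intro u v p
  induction p with
  | nil => intro hp; exact ⟨SimpleGraph.Walk.nil, rfl⟩
  | @cons a b c h p ih =>
    intro hp
    have hb : ∀ x ∈ p.support, x.1 ∈ S := fun x hx =>
      hp x (by simp [SimpleGraph.Walk.support_cons, hx])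
    obtain ⟨q, hq⟩ := ih hb
    have hadj : (G.induce S).Adj ⟨a.1, hp a (SimpleGraph.Walk.cons h p).start_mem_support⟩
        ⟨b.1, hb b p.start_mem_support⟩ := h
    exact ⟨SimpleGraph.Walk.cons hadj q, by simp [SimpleGraph.Walk.length_cons, hq]⟩

/-- If an isometric subgraph `V` of `Q_m` shatters `Y`, then for every `A ⊆ Y`
the fiber `G(v_A)` is a nonempty isometric subgraph. -/
theorem stmt2 (m : ℕ) (V : Set (Finset (Fin m))) (hV : IsPC V)
    (Y : Finset (Fin m)) (hY : Shatters V Y) (A : Finset (Fin m)) (hA : A ⊆ Y) :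
    ({B ∈ V | B ∩ Y = A} : Set (Finset (Fin m))).Nonempty ∧
      IsPC {B ∈ V | B ∩ Y = A} := by
  set S : Set (Finset (Fin m)) := {B ∈ V | B ∩ Y = A} with hS
  have hSV : S ⊆ V := fun B hB => hB.1
  obtain ⟨B₀, hB₀V, hB₀A⟩ := hY A hA
  refine ⟨⟨B₀, hB₀V, hB₀A⟩, ?_⟩
  intro u v
  show ((cubeGraph m).induce S).dist u v = hdist u.1 v.1
  -- upper bound: construct a walk inside S of length hdist
  have hupper : ∃ q : ((cubeGraph m).induce S).Walk u v, q.length = hdist u.1 v.1 := by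
    by_cases heq : u.1 = v.1
    · have : u = v := Subtype.ext heq
      subst this
      exact ⟨SimpleGraph.Walk.nil, by simp [hdist]⟩
    · set u' : V := ⟨u.1, hSV u.2⟩
      set v' : V := ⟨v.1, hSV v.2⟩
      have hd : ((cubeGraph m).induce V).dist u' v' = hdist u.1 v.1 := hV u' v'
      have hdpos : hdist u.1 v.1 ≠ 0 := by
        intro h
        apply heq
        have h' := Finset.card_eq_zero.mp h
        exact symmDiff_eq_bot.mp (by simpa [← Finset.bot_eq_empty] using h')
      have hreach : ((cubeGraph m).induce V).Reachable u' v' :=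
        SimpleGraph.Reachable.of_dist_ne_zero (hd ▸ hdpos)
      obtain ⟨p, hp⟩ := hreach.exists_walk_length_eq_dist
      have hplen : p.length = hdist u.1 v.1 := hp.trans hd
      -- every vertex of p lies in S
      have hsupp : ∀ x ∈ p.support, x.1 ∈ S := by
        intro x hx
        have hx1 := SimpleGraph.dist_le (p.takeUntil x hx)
        have hx2 := SimpleGraph.dist_le (p.dropUntil x hx)
        have hlen : (p.takeUntil x hx).length + (p.dropUntil x hx).length = p.length := by
          have h := congrArg SimpleGraph.Walk.length (p.take_spec hx)
          rwa [SimpleGraph.Walk.length_append] at h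
        have h1 : hdist u.1 x.1 + hdist x.1 v.1 ≤ hdist u.1 v.1 := by
          have e1 : ((cubeGraph m).induce V).dist u' x = hdist u.1 x.1 := hV u' x
          have e2 : ((cubeGraph m).induce V).dist x v' = hdist x.1 v.1 := hV x v'
          omega
        have h2 : hdist u.1 x.1 + hdist x.1 v.1 = hdist u.1 v.1 :=
          le_antisymm h1 (hdist_triangle' _ _ _)
        refine ⟨x.2, between_inter u.2.2 v.2.2 h2⟩
      obtain ⟨q, hq⟩ := walk_restrict p hsupp
      have e1 : (⟨u'.1, hsupp u' p.start_mem_support⟩ : S) = u := Subtype.ext rfl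
      have e2 : (⟨v'.1, hsupp v' p.end_mem_support⟩ : S) = v := Subtype.ext rfl
      refine ⟨q.copy e1 e2, ?_⟩
      rw [SimpleGraph.Walk.length_copy, hq, hplen]
  obtain ⟨q, hq⟩ := hupper
  refine le_antisymm (by have := SimpleGraph.dist_le q; omega) ?_
  -- lower bound
  have hreachS : ((cubeGraph m).induce S).Reachable u v := ⟨q⟩
  obtain ⟨r, hr⟩ := hreachS.exists_walk_length_eq_dist
  have : hdist u.1 v.1 ≤ r.length := by
    let hom : (cubeGraph m).induce S →g cubeGraph m :=
      ⟨Subtype.val, fun h => h⟩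
    have h := hdist_le_walk_length (r.map hom)
    rw [SimpleGraph.Walk.length_map] at h
    exact h
  omega
end

section
/- Let G be a partial cube of VC-dimension at most d and let G' be obtained from G by an isometric expansion with respect to an isometric cover (G¹, G⁰, G²). Then G' has VC-dimension at most d if and only if G⁰ has VC-dimension at most d−1. -/
open Finset

/-- Isometric expansion of a partial cube along a cover `(V1, V0, V2)`:
one copy of `V1`, one copy of `V2` shifted into the new coordinate. -/
def expansion {m : ℕ} (V1 V2 : Set (Finset (Fin m))) : Set (Finset (Fin (m + 1))) :=
  (fun B => B.image Fin.castSucc) '' V1 ∪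
    (fun B => insert (Fin.last m) (B.image Fin.castSucc)) '' V2

namespace Stmt4Aux
variable {m : ℕ}

lemma hdist_self (A : Finset (Fin m)) : hdist A A = 0 := by simp [hdist]

lemma hdist_eq_zero {A B : Finset (Fin m)} (h : hdist A B = 0) : A = B := by
  rwa [hdist, card_eq_zero, ← bot_eq_empty, symmDiff_eq_bot] at h

lemma hdist_triangle (A B C : Finset (Fin m)) : hdist A C ≤ hdist A B + hdist B C := by
  have h1 : symmDiff A C ⊆ symmDiff A B ∪ symmDiff B C := by
    have := symmDiff_triangle A B C
    rwa [sup_eq_union] at this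
  exact le_trans (card_le_card h1) (card_union_le _ _)

lemma symmDiff_subset_of_between {u w v : Finset (Fin m)}
    (h : hdist u w + hdist w v = hdist u v) : symmDiff u w ⊆ symmDiff u v := by
  have key : symmDiff (symmDiff u w) (symmDiff w v) = symmDiff u v := by
    rw [← symmDiff_assoc, symmDiff_symmDiff_cancel_right]
  set A := symmDiff u w
  set B := symmDiff w v
  have hsub : symmDiff A B ⊆ A ∪ B := by
    have := symmDiff_le_sup (a := A) (b := B); rwa [sup_eq_union] at this
  have hc : (A ∪ B).card + (A ∩ B).card = A.card + B.card := card_union_add_card_inter A B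
  have hcard : (symmDiff A B).card = A.card + B.card := by
    rw [key]; exact h.symm
  have h2 : (A ∩ B).card = 0 := by
    have := card_le_card hsub
    omega
  have hdisj : Disjoint A B :=
    disjoint_iff_inter_eq_empty.mpr (card_eq_zero.mp h2)
  calc A ⊆ A ∪ B := subset_union_left
    _ = symmDiff A B := by rw [hdisj.symmDiff_eq_sup, sup_eq_union]
    _ = symmDiff u v := key

lemma trace_eq_of_between {u w v Y : Finset (Fin m)}
    (h : hdist u w + hdist w v = hdist u v) (hT : u ∩ Y = v ∩ Y) : w ∩ Y = u ∩ Y := by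
  have h1 := symmDiff_subset_of_between h
  have h2 : symmDiff u v ∩ Y = symmDiff (u ∩ Y) (v ∩ Y) := inf_symmDiff_distrib_right ..
  have h3 : symmDiff u v ∩ Y = ∅ := by rw [h2, hT, symmDiff_self]; rfl
  have h4 : symmDiff (u ∩ Y) (w ∩ Y) = ∅ := by
    have : symmDiff u w ∩ Y ⊆ symmDiff u v ∩ Y := inter_subset_inter_right h1
    rw [h3, subset_empty] at this
    have h5 : symmDiff u w ∩ Y = symmDiff (u ∩ Y) (w ∩ Y) := inf_symmDiff_distrib_right ..
    rw [← h5]; exact this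
  exact ((symmDiff_eq_bot (a := u ∩ Y)).mp h4).symm


lemma hdist_le_walk_length {V : Set (Finset (Fin m))} {a b : V}
    (p : ((cubeGraph m).induce V).Walk a b) : hdist a.1 b.1 ≤ p.length := by
  induction p with
  | nil => simp [hdist_self]
  | @cons a c b h q ih =>
    have h1 : hdist a.1 c.1 = 1 := h
    calc hdist a.1 b.1 ≤ hdist a.1 c.1 + hdist c.1 b.1 := hdist_triangle _ _ _
      _ ≤ 1 + q.length := by omega
      _ = (SimpleGraph.Walk.cons h q).length := by simp [SimpleGraph.Walk.length_cons]; omega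

lemma gate_walk {V V1 V2 : Set (Finset (Fin m))}
    (hedge : ∀ u ∈ V, ∀ v ∈ V, (cubeGraph m).Adj u v →
      (u ∈ V1 ∧ v ∈ V1) ∨ (u ∈ V2 ∧ v ∈ V2)) :
    ∀ {a b : V} (p : ((cubeGraph m).induce V).Walk a b), p.length = hdist a.1 b.1 →
    a.1 ∈ V1 → b.1 ∈ V2 →
    ∃ w ∈ V1 ∩ V2, hdist a.1 w + hdist w b.1 = hdist a.1 b.1 := by
  intro a b p
  induction p with
  | @nil x => intro _ ha hb; exact ⟨x.1, ⟨ha, hb⟩, by simp [hdist_self]⟩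
  | @cons a c b h q ih =>
    intro hlen ha hb
    have hadj : (cubeGraph m).Adj a.1 c.1 := h
    rcases hedge a.1 a.2 c.1 c.2 hadj with ⟨ha1, hc1⟩ | ⟨ha2, hc2⟩
    · -- a, c ∈ V1 : recurse
      have h1 : hdist a.1 c.1 = 1 := hadj
      have hq : hdist c.1 b.1 ≤ q.length := hdist_le_walk_length q
      have hab : hdist a.1 b.1 ≤ hdist a.1 c.1 + hdist c.1 b.1 := hdist_triangle _ _ _
      have hlen' : q.length + 1 = hdist a.1 b.1 := by
        simpa [SimpleGraph.Walk.length_cons] using hlen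
      have hqeq : q.length = hdist c.1 b.1 := by omega
      obtain ⟨w, hw, hwd⟩ := ih hqeq hc1 hb
      refine ⟨w, hw, ?_⟩
      have t1 : hdist a.1 b.1 ≤ hdist a.1 w + hdist w b.1 := hdist_triangle _ _ _
      have t2 : hdist a.1 w ≤ hdist a.1 c.1 + hdist c.1 w := hdist_triangle _ _ _
      omega
    · exact ⟨a.1, ⟨ha, ha2⟩, by simp [hdist_self]⟩

lemma gate {V V1 V2 : Set (Finset (Fin m))} (hV : IsPC V) (hcov : V1 ∪ V2 = V)
    (hedge : ∀ u ∈ V, ∀ v ∈ V, (cubeGraph m).Adj u v →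
      (u ∈ V1 ∧ v ∈ V1) ∨ (u ∈ V2 ∧ v ∈ V2))
    {u v : Finset (Fin m)} (hu1 : u ∈ V1) (hv2 : v ∈ V2) :
    ∃ w ∈ V1 ∩ V2, hdist u w + hdist w v = hdist u v := by
  have hu : u ∈ V := hcov ▸ Or.inl hu1
  have hv : v ∈ V := hcov ▸ Or.inr hv2
  by_cases h0 : hdist u v = 0
  · have := hdist_eq_zero h0
    subst this
    exact ⟨u, ⟨hu1, hv2⟩, by simp [hdist_self]⟩
  · have hdeq : ((cubeGraph m).induce V).dist ⟨u, hu⟩ ⟨v, hv⟩ = hdist u v := hV ⟨u, hu⟩ ⟨v, hv⟩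
    obtain ⟨p, hp⟩ := SimpleGraph.exists_walk_of_dist_ne_zero (by rw [hdeq]; exact h0)
    exact gate_walk hedge p (by rw [hp, hdeq]) hu1 hv2

end Stmt4Aux


section MainAux
variable {m : ℕ}

lemma last_not_mem_image (B : Finset (Fin m)) : Fin.last m ∉ B.image Fin.castSucc := by
  intro h
  obtain ⟨x, _, hx⟩ := mem_image.mp h
  exact (Fin.castSucc_lt_last x).ne hx

lemma image_inter_image (B Y : Finset (Fin m)) :
    B.image Fin.castSucc ∩ Y.image Fin.castSucc = (B ∩ Y).image Fin.castSucc :=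
  (image_inter B Y (Fin.castSucc_injective m)).symm

lemma image_castSucc_cancel {s t : Finset (Fin m)}
    (h : s.image Fin.castSucc = t.image Fin.castSucc) : s = t :=
  image_injective (Fin.castSucc_injective m) h

end MainAux

/-- The isometric expansion of a partial cube of VC-dimension at most `d` has
VC-dimension at most `d` iff `G⁰ = V1 ∩ V2` has VC-dimension at most `d - 1`. -/
theorem stmt4 (m d : ℕ) (hd : 1 ≤ d) (V V1 V2 : Set (Finset (Fin m)))
    (hV : IsPC V) (h1 : V1 ⊆ V) (h2 : V2 ⊆ V) (hi1 : IsPC V1) (hi2 : IsPC V2)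
    (hcov : V1 ∪ V2 = V)
    (hedge : ∀ u ∈ V, ∀ v ∈ V, (cubeGraph m).Adj u v →
      (u ∈ V1 ∧ v ∈ V1) ∨ (u ∈ V2 ∧ v ∈ V2))
    (hne : (V1 ∩ V2).Nonempty) (hvc : VCdimLE V d) :
    VCdimLE (expansion V1 V2) d ↔ VCdimLE (V1 ∩ V2) (d - 1) := by
  have inj := Fin.castSucc_injective m
  constructor
  · -- VCdimLE expansion d → VCdimLE (V1∩V2) (d-1)
    intro hexp Y' hsh'
    set Y : Finset (Fin (m+1)) := insert (Fin.last m) (Y'.image Fin.castSucc) with hYdef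
    have hsh : Shatters (expansion V1 V2) Y := by
      intro Z hZ
      by_cases hlZ : Fin.last m ∈ Z
      · have hsub : Z.erase (Fin.last m) ⊆ Y'.image Fin.castSucc := by
          intro x hx
          have hx1 := mem_erase.mp hx
          exact (mem_insert.mp (hZ hx1.2)).resolve_left hx1.1
        obtain ⟨Z', hZ'Y, hZ'img⟩ := subset_image_iff.mp hsub
        obtain ⟨B, hB, hBY⟩ := hsh' Z' hZ'Y
        refine ⟨insert (Fin.last m) (B.image Fin.castSucc),
          Set.mem_union_right _ ⟨B, hB.2, rfl⟩, ?_⟩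
        calc insert (Fin.last m) (B.image Fin.castSucc) ∩ Y
            = insert (Fin.last m) (B.image Fin.castSucc ∩ Y'.image Fin.castSucc) :=
              (insert_inter_distrib _ _ _).symm
          _ = Z := by rw [image_inter_image, hBY, hZ'img, insert_erase hlZ]
      · have hsub : Z ⊆ Y'.image Fin.castSucc := fun x hx =>
          (mem_insert.mp (hZ hx)).resolve_left (by rintro rfl; exact hlZ hx)
        obtain ⟨Z', hZ'Y, hZ'img⟩ := subset_image_iff.mp hsub
        obtain ⟨B, hB, hBY⟩ := hsh' Z' hZ'Y
        refine ⟨B.image Fin.castSucc, Set.mem_union_left _ ⟨B, hB.1, rfl⟩, ?_⟩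
        calc B.image Fin.castSucc ∩ Y
            = B.image Fin.castSucc ∩ Y'.image Fin.castSucc :=
              inter_insert_of_notMem (last_not_mem_image B)
          _ = Z := by rw [image_inter_image, hBY, hZ'img]
    have hcard : Y.card = Y'.card + 1 := by
      rw [hYdef, card_insert_of_notMem (last_not_mem_image Y'), card_image_of_injective _ inj]
    have := hexp Y hsh
    omega
  · -- VCdimLE (V1∩V2) (d-1) → VCdimLE expansion d
    intro h0 Y hsh
    by_cases hl : Fin.last m ∈ Y
    · -- Y contains the new coordinate
      have hYsub : Y.erase (Fin.last m) ⊆ univ.image Fin.castSucc := by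
        intro x hx
        obtain ⟨y, hy⟩ := Fin.exists_castSucc_eq.mpr (mem_erase.mp hx).1
        exact mem_image.mpr ⟨y, mem_univ y, hy⟩
      obtain ⟨Y', _, hY'img⟩ := subset_image_iff.mp hYsub
      have hYeq : Y = insert (Fin.last m) (Y'.image Fin.castSucc) := by
        rw [hY'img, insert_erase hl]
      have hs1 : ∀ Z' ⊆ Y', ∃ B ∈ V1, B ∩ Y' = Z' := by
        intro Z' hZ'
        obtain ⟨C, hC, hCY⟩ := hsh (Z'.image Fin.castSucc)
          (by rw [hYeq]; exact (image_subset_image hZ').trans (subset_insert _ _))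
        rcases hC with ⟨B, hB, rfl⟩ | ⟨B, hB, rfl⟩
        · refine ⟨B, hB, image_castSucc_cancel ?_⟩
          calc (B ∩ Y').image Fin.castSucc
              = B.image Fin.castSucc ∩ Y'.image Fin.castSucc := (image_inter_image B Y').symm
            _ = B.image Fin.castSucc ∩ Y := by
                rw [hYeq, inter_insert_of_notMem (last_not_mem_image B)]
            _ = Z'.image Fin.castSucc := hCY
        · exfalso
          have : Fin.last m ∈ Z'.image Fin.castSucc := by
            rw [← hCY]; exact mem_inter.mpr ⟨mem_insert_self _ _, hl⟩
          exact last_not_mem_image Z' this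
      have hs2 : ∀ Z' ⊆ Y', ∃ B ∈ V2, B ∩ Y' = Z' := by
        intro Z' hZ'
        obtain ⟨C, hC, hCY⟩ := hsh (insert (Fin.last m) (Z'.image Fin.castSucc))
          (by rw [hYeq]; exact insert_subset_insert _ (image_subset_image hZ'))
        rcases hC with ⟨B, hB, rfl⟩ | ⟨B, hB, rfl⟩
        · exfalso
          have : Fin.last m ∈ B.image Fin.castSucc ∩ Y := by
            rw [hCY]; exact mem_insert_self _ _
          exact last_not_mem_image B (mem_inter.mp this).1
        · refine ⟨B, hB, image_castSucc_cancel ?_⟩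
          have hCe : insert (Fin.last m) (B.image Fin.castSucc) ∩ Y
              = insert (Fin.last m) ((B ∩ Y').image Fin.castSucc) := by
            rw [hYeq, ← insert_inter_distrib, image_inter_image]
          rw [hCe] at hCY
          have := congrArg (fun s => Finset.erase s (Fin.last m)) hCY
          simpa [erase_insert (last_not_mem_image (B ∩ Y')),
            erase_insert (last_not_mem_image Z')] using this
      have hs0 : Shatters (V1 ∩ V2) Y' := by
        intro Z' hZ'
        obtain ⟨u, hu, huY⟩ := hs1 Z' hZ'
        obtain ⟨v, hv, hvY⟩ := hs2 Z' hZ'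
        obtain ⟨w, hw, hwd⟩ := Stmt4Aux.gate hV hcov hedge hu hv
        exact ⟨w, hw, by rw [Stmt4Aux.trace_eq_of_between hwd (huY.trans hvY.symm), huY]⟩
      have hc' := h0 Y' hs0
      have hcard : Y.card = Y'.card + 1 := by
        rw [hYeq, card_insert_of_notMem (last_not_mem_image Y'), card_image_of_injective _ inj]
      omega
    · -- Y avoids the new coordinate
      have hYsub : Y ⊆ univ.image Fin.castSucc := by
        intro x hx
        obtain ⟨y, hy⟩ := Fin.exists_castSucc_eq.mpr (fun h => hl (h ▸ hx))
        exact mem_image.mpr ⟨y, mem_univ y, hy⟩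
      obtain ⟨Y', _, hY'img⟩ := subset_image_iff.mp hYsub
      have hshV : Shatters V Y' := by
        intro Z' hZ'
        obtain ⟨C, hC, hCY⟩ := hsh (Z'.image Fin.castSucc)
          (hY'img ▸ image_subset_image hZ')
        rcases hC with ⟨B, hB, rfl⟩ | ⟨B, hB, rfl⟩
        · refine ⟨B, hcov ▸ Set.mem_union_left _ hB, image_castSucc_cancel ?_⟩
          calc (B ∩ Y').image Fin.castSucc
              = B.image Fin.castSucc ∩ Y := by rw [← image_inter_image, hY'img]
            _ = Z'.image Fin.castSucc := hCY
        · refine ⟨B, hcov ▸ Set.mem_union_right _ hB, image_castSucc_cancel ?_⟩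
          calc (B ∩ Y').image Fin.castSucc
              = B.image Fin.castSucc ∩ Y := by rw [← image_inter_image, hY'img]
            _ = insert (Fin.last m) (B.image Fin.castSucc) ∩ Y :=
              (insert_inter_of_notMem hl).symm
            _ = Z'.image Fin.castSucc := hCY
      have := hvc Y' hshV
      have hcard : Y.card = Y'.card := by
        rw [← hY'img, card_image_of_injective _ inj]
      omega
end

section
/- A partial cube G has VC-dimension at most d if and only if each hyperplane H_i of G has VC-dimension at most d−1, where the hyperplane of a Θ-class E_i is the 1-inclusion graph of the set family obtained from the union of the two boundaries ∂G_i⁻ ∪ ∂G_i⁺ by removing the coordinate i from each set. -/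
open Finset

/-- The hyperplane of the Θ-class `E_i`: boundaries with coordinate `i` removed. -/
def hyperplane {m : ℕ} (V : Set (Finset (Fin m))) (i : Fin m) : Set (Finset (Fin m)) :=
  {B | i ∉ B ∧ B ∈ V ∧ insert i B ∈ V}

lemma symm3 {m : ℕ} (u w v : Finset (Fin m)) :
    symmDiff (symmDiff u w) (symmDiff w v) = symmDiff u v := by
  rw [symmDiff_assoc, symmDiff_symmDiff_cancel_left]

lemma symm_sub {m : ℕ} (A B : Finset (Fin m)) : symmDiff A B ⊆ A ∪ B := by
  rw [← Finset.sup_eq_union, ← Finset.le_iff_subset]; exact symmDiff_le_sup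

lemma key {m : ℕ} {V : Set (Finset (Fin m))} (hV : IsPC V) :
    ∀ (u v : V) (p : ((cubeGraph m).induce V).Walk u v),
      p.length = hdist u.1 v.1 →
      ∀ i : Fin m, i ∉ u.1 → i ∈ v.1 →
      ∃ B, B ∈ V ∧ i ∉ B ∧ insert i B ∈ V ∧ symmDiff u.1 B ⊆ symmDiff u.1 v.1 := by
  intro u v p
  induction p with
  | nil =>
    intro hlen i hiu hiv
    exact absurd hiv hiu
  | @cons u w v hadj q ih =>
    intro hlen i hiu hiv
    -- adjacency gives card (symmDiff u w) = 1
    have hadj' : (symmDiff u.1 w.1).card = 1 := by simpa [cubeGraph] using hadj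
    obtain ⟨j, hj⟩ := Finset.card_eq_one.mp hadj'
    -- distances
    have hdwv : ((cubeGraph m).induce V).dist w v ≤ q.length := SimpleGraph.dist_le q
    have hpc := hV w v
    have huv : hdist u.1 v.1 = q.length + 1 := by
      simpa [SimpleGraph.Walk.length_cons] using hlen.symm
    have htri : hdist u.1 v.1 ≤ 1 + hdist w.1 v.1 := by
      have hsub : symmDiff u.1 v.1 ⊆ symmDiff u.1 w.1 ∪ symmDiff w.1 v.1 := by
        rw [← symm3 u.1 w.1 v.1]; exact symm_sub _ _
      calc hdist u.1 v.1 ≤ (symmDiff u.1 w.1 ∪ symmDiff w.1 v.1).card := card_le_card hsub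
        _ ≤ (symmDiff u.1 w.1).card + (symmDiff w.1 v.1).card := card_union_le _ _
        _ = 1 + hdist w.1 v.1 := by rw [hadj']; rfl
    have hwv : hdist w.1 v.1 = q.length := by
      have h1 : hdist w.1 v.1 ≤ q.length := by rw [hdist]; rw [← hpc]; exact hdwv
      omega
    -- equality case: symmDiff u w and symmDiff w v disjoint, union = symmDiff u v
    have hcardeq : (symmDiff (symmDiff u.1 w.1) (symmDiff w.1 v.1)).card
        = (symmDiff u.1 w.1).card + (symmDiff w.1 v.1).card := by
      rw [symm3]
      show hdist u.1 v.1 = _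
      rw [hadj']; show _ = 1 + hdist w.1 v.1
      omega
    have hunion : symmDiff u.1 v.1 = symmDiff u.1 w.1 ∪ symmDiff w.1 v.1 := by
      have h2 : symmDiff (symmDiff u.1 w.1) (symmDiff w.1 v.1)
          = symmDiff u.1 w.1 ∪ symmDiff w.1 v.1 := by
        apply Finset.eq_of_subset_of_card_le (symm_sub _ _)
        calc (symmDiff u.1 w.1 ∪ symmDiff w.1 v.1).card
            ≤ (symmDiff u.1 w.1).card + (symmDiff w.1 v.1).card := card_union_le _ _
          _ = _ := hcardeq.symm
      rw [← h2, symm3]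
    by_cases hji : j = i
    · subst hji
      -- w = insert j u
      have hjw : w.1 = insert j u.1 := by
        have hju : j ∈ symmDiff u.1 w.1 := by rw [hj]; exact mem_singleton_self j
        have : j ∈ w.1 := by
          rcases Finset.mem_symmDiff.mp hju with ⟨h1, _⟩ | ⟨h1, h2⟩
          · exact absurd h1 hiu
          · exact h1
        ext x
        simp only [mem_insert]
        by_cases hx : x = j
        · subst hx; simp [this]
        · constructor
          · intro hxw
            right
            by_contra hxu
            have : x ∈ symmDiff u.1 w.1 := Finset.mem_symmDiff.mpr (Or.inr ⟨hxw, hxu⟩)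
            rw [hj] at this; exact hx (mem_singleton.mp this)
          · rintro (h | hxu)
            · exact absurd h hx
            · by_contra hxw
              have : x ∈ symmDiff u.1 w.1 := Finset.mem_symmDiff.mpr (Or.inl ⟨hxu, hxw⟩)
              rw [hj] at this; exact hx (mem_singleton.mp this)
      exact ⟨u.1, u.2, hiu, by rw [← hjw]; exact w.2, by simp⟩
    · -- i ∈ v \ w, recurse
      have hiw : i ∉ w.1 := by
        intro hiw
        have : i ∈ symmDiff u.1 w.1 := Finset.mem_symmDiff.mpr (Or.inr ⟨hiw, hiu⟩)
        rw [hj] at this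
        exact hji (mem_singleton.mp this).symm
      obtain ⟨B, hBV, hiB, hinsB, hsub⟩ := ih (by
        simpa [hwv] using rfl) i hiw hiv
      refine ⟨B, hBV, hiB, hinsB, ?_⟩
      intro x hx
      rw [hunion]
      rcases Finset.mem_symmDiff.mp hx with ⟨h1, h2⟩ | ⟨h1, h2⟩
      · by_cases hxw : x ∈ w.1
        · exact mem_union_right _ (hsub (Finset.mem_symmDiff.mpr (Or.inl ⟨hxw, h2⟩)))
        · exact mem_union_left _ (Finset.mem_symmDiff.mpr (Or.inl ⟨h1, hxw⟩))
      · by_cases hxw : x ∈ w.1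
        · exact mem_union_left _ (Finset.mem_symmDiff.mpr (Or.inr ⟨hxw, h2⟩))
        · exact mem_union_right _ (hsub (Finset.mem_symmDiff.mpr (Or.inr ⟨h1, hxw⟩)))

/-- A partial cube has VC-dimension at most `d` iff each of its hyperplanes has
VC-dimension at most `d - 1`. -/
theorem stmt5 (m d : ℕ) (hd : 1 ≤ d) (V : Set (Finset (Fin m))) (hV : IsPC V) :
    VCdimLE V d ↔ ∀ i : Fin m, VCdimLE (hyperplane V i) (d - 1) := by
  constructor
  · intro h i Y hsh
    have hiY : i ∉ Y := by
      intro hiY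
      obtain ⟨B, hB, hBY⟩ := hsh {i} (singleton_subset_iff.mpr hiY)
      have : i ∈ B := by
        have : i ∈ B ∩ Y := hBY ▸ mem_singleton_self i
        exact (mem_inter.mp this).1
      exact hB.1 this
    have hshV : Shatters V (insert i Y) := by
      intro Z hZ
      obtain ⟨B, hB, hBY⟩ := hsh (Z.erase i) (fun x hx => by
        have hx' := Finset.mem_of_mem_erase hx
        rcases mem_insert.mp (hZ hx') with h1 | h1
        · exact absurd h1 (Finset.ne_of_mem_erase hx)
        · exact h1)
      by_cases hiZ : i ∈ Z
      · refine ⟨insert i B, hB.2.2, ?_⟩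
        ext x
        simp only [mem_inter, mem_insert]
        constructor
        · rintro ⟨hx1 | hx1, hx2 | hx2⟩
          · subst hx1; exact hiZ
          · exact hx1 ▸ hiZ
          · exact hx2 ▸ hiZ
          · have : x ∈ B ∩ Y := mem_inter.mpr ⟨hx1, hx2⟩
            rw [hBY] at this
            exact Finset.mem_of_mem_erase this
        · intro hxZ
          by_cases hxi : x = i
          · exact ⟨Or.inl hxi, Or.inl hxi⟩
          · have : x ∈ B ∩ Y := by
              rw [hBY]; exact Finset.mem_erase.mpr ⟨hxi, hxZ⟩
            exact ⟨Or.inr (mem_inter.mp this).1, Or.inr (mem_inter.mp this).2⟩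
      · refine ⟨B, hB.2.1, ?_⟩
        ext x
        simp only [mem_inter, mem_insert]
        constructor
        · rintro ⟨hx1, hx2 | hx2⟩
          · subst hx2; exact absurd hx1 hB.1
          · have : x ∈ B ∩ Y := mem_inter.mpr ⟨hx1, hx2⟩
            rw [hBY] at this
            exact Finset.mem_of_mem_erase this
        · intro hxZ
          have hxi : x ≠ i := fun h => hiZ (h ▸ hxZ)
          have : x ∈ B ∩ Y := by
            rw [hBY]; exact Finset.mem_erase.mpr ⟨hxi, hxZ⟩
          exact ⟨(mem_inter.mp this).1, Or.inr (mem_inter.mp this).2⟩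
    have := h (insert i Y) hshV
    rw [card_insert_of_notMem hiY] at this
    omega
  · intro h Y hsh
    by_cases hY : Y = ∅
    · subst hY; simpa using hd
    obtain ⟨i, hiY⟩ := Finset.nonempty_of_ne_empty hY
    have hsh' : Shatters (hyperplane V i) (Y.erase i) := by
      intro Z hZ
      have hZY : Z ⊆ Y := hZ.trans (erase_subset _ _)
      have hiZ : i ∉ Z := fun hi => (Finset.notMem_erase i Y) (hZ hi)
      obtain ⟨B₀, hB₀V, hB₀⟩ := hsh Z hZY
      obtain ⟨B₁, hB₁V, hB₁⟩ := hsh (insert i Z) (insert_subset hiY hZY)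
      have hiB₀ : i ∉ B₀ := fun hi => hiZ (hB₀ ▸ mem_inter.mpr ⟨hi, hiY⟩)
      have hiB₁ : i ∈ B₁ := (mem_inter.mp (hB₁ ▸ mem_insert_self i Z)).1
      have hne : B₀ ≠ B₁ := fun he => hiB₀ (he ▸ hiB₁)
      set G := (cubeGraph m).induce V with hG
      have hdist_pos : G.dist ⟨B₀, hB₀V⟩ ⟨B₁, hB₁V⟩ ≠ 0 := by
        rw [hV ⟨B₀, hB₀V⟩ ⟨B₁, hB₁V⟩]
        simp only [ne_eq, card_eq_zero]
        intro hc
        have : i ∈ symmDiff B₀ B₁ := Finset.mem_symmDiff.mpr (Or.inr ⟨hiB₁, hiB₀⟩)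
        rw [hc] at this
        exact absurd this (Finset.notMem_empty i)
      obtain ⟨p, hp⟩ := SimpleGraph.exists_walk_of_dist_ne_zero hdist_pos
      have hplen : p.length = hdist B₀ B₁ := by
        rw [hp, hV ⟨B₀, hB₀V⟩ ⟨B₁, hB₁V⟩]; rfl
      obtain ⟨B, hBV, hiB, hinsB, hsub⟩ :=
        key hV ⟨B₀, hB₀V⟩ ⟨B₁, hB₁V⟩ p hplen i hiB₀ hiB₁
      refine ⟨B, ⟨hiB, hBV, hinsB⟩, ?_⟩
      have hfix : ∀ x ∈ Y.erase i, (x ∈ B ↔ x ∈ B₀) := by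
        intro x hx
        have hxi : x ≠ i := Finset.ne_of_mem_erase hx
        have hxY : x ∈ Y := Finset.mem_of_mem_erase hx
        by_contra hc
        have hxs : x ∈ symmDiff B₀ B := by
          rw [Finset.mem_symmDiff]; tauto
        have hxs' : x ∈ symmDiff B₀ B₁ := hsub hxs
        have h01 : (x ∈ B₀) ↔ (x ∈ B₁) := by
          constructor
          · intro hx0
            have : x ∈ Z := hB₀ ▸ mem_inter.mpr ⟨hx0, hxY⟩
            have : x ∈ B₁ ∩ Y := by rw [hB₁]; exact mem_insert_of_mem this
            exact (mem_inter.mp this).1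
          · intro hx1
            have : x ∈ insert i Z := hB₁ ▸ mem_inter.mpr ⟨hx1, hxY⟩
            have hxZ : x ∈ Z := by
              rcases mem_insert.mp this with h1 | h1
              · exact absurd h1 hxi
              · exact h1
            have hx0 : x ∈ B₀ ∩ Y := by rw [hB₀]; exact hxZ
            exact (mem_inter.mp hx0).1
        rw [Finset.mem_symmDiff] at hxs'
        tauto
      ext x
      simp only [mem_inter]
      constructor
      · rintro ⟨hx1, hx2⟩
        have : x ∈ B₀ := (hfix x hx2).mp hx1
        have : x ∈ B₀ ∩ Y := mem_inter.mpr ⟨this, Finset.mem_of_mem_erase hx2⟩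
        rw [hB₀] at this; exact this
      · intro hxZ
        have hxY' : x ∈ Y.erase i :=
          Finset.mem_erase.mpr ⟨fun h => hiZ (h ▸ hxZ), hZY hxZ⟩
        have : x ∈ B₀ ∩ Y := by rw [hB₀]; exact hxZ
        exact ⟨(hfix x hxY').mpr (mem_inter.mp this).1, hxY'⟩
    have := h i (Y.erase i) hsh'
    have hcard := Finset.card_erase_of_mem hiY
    omega
end

section
/- If H = SK_n with n ≥ 4 is an isometric subgraph of a partial cube G, then G admits an isometric embedding into a hypercube such that the embedding of H is standard, i.e., each original vertex of H is mapped to a singleton {i} and each subdivision vertex of an edge ij to the pair {i,j}. -/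
open Finset

section Helpers
open SimpleGraph
variable {α : Type*} [DecidableEq α]

lemma sd_singleton (a b : α) (h : a ≠ b) : symmDiff ({a} : Finset α) {b} = {a, b} := by
  ext x; simp [Finset.mem_symmDiff, h]; aesop

lemma sd_in_pair (i j : α) (h : i ≠ j) : symmDiff ({i} : Finset α) {i, j} = {j} := by
  ext x; simp [Finset.mem_symmDiff]; constructor
  · rintro (⟨rfl, h1⟩ | ⟨h1 | rfl, h2⟩) <;> tauto
  · rintro rfl; tauto

lemma sd_pair_left (i j : α) (h : i ≠ j) : symmDiff ({i, j} : Finset α) {i} = {j} := by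
  ext x; simp [Finset.mem_symmDiff]; aesop

lemma sd_pair_right (i j : α) (h : i ≠ j) : symmDiff ({i, j} : Finset α) {j} = {i} := by
  ext x; simp [Finset.mem_symmDiff]; aesop

lemma sd_pair_mid (i j k : α) (hij : i ≠ j) (hik : i ≠ k) (hjk : j ≠ k) :
    symmDiff ({i, j} : Finset α) {i, k} = {j, k} := by
  ext x; simp [Finset.mem_symmDiff]; aesop

lemma sd_comm4 (a b c d : Finset α) :
    symmDiff (symmDiff a b) (symmDiff c d) = symmDiff (symmDiff a c) (symmDiff b d) := by
  ext x; simp [Finset.mem_symmDiff]; tauto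

lemma sd_cancel_left (a b c : Finset α) :
    symmDiff (symmDiff a b) (symmDiff a c) = symmDiff b c := by
  ext x; simp [Finset.mem_symmDiff]; tauto

lemma sd_cancel_mid (a b c : Finset α) :
    symmDiff (symmDiff a b) (symmDiff b c) = symmDiff a c := by
  ext x; simp [Finset.mem_symmDiff]; tauto

lemma sd_cancel_right (a b c : Finset α) :
    symmDiff (symmDiff a c) (symmDiff b c) = symmDiff a b := by
  ext x; simp [Finset.mem_symmDiff]; tauto

lemma keyX {s : Finset α} {a b : α} (hs : s.card = 2)
    (h4 : (symmDiff s (symmDiff ({a} : Finset α) {b})).card = 4) :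
    a ∉ s ∧ b ∉ s ∧ a ≠ b := by
  have hab : a ≠ b := by
    rintro rfl
    rw [symmDiff_self, symmDiff_bot, hs] at h4; omega
  rw [sd_singleton a b hab] at h4
  have gen : ∀ x ∈ s, x ∈ ({a, b} : Finset α) → False := by
    intro x hx hx2
    have hsub : symmDiff s {a, b} ⊆ (s ∪ {a, b}).erase x := by
      intro y hy
      rw [Finset.mem_symmDiff] at hy
      rw [mem_erase, mem_union]
      constructor
      · rintro rfl; tauto
      · tauto
    have h1 := card_le_card hsub
    rw [card_erase_of_mem (by simp [hx]), h4] at h1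
    have h2 := card_union_le s ({a, b} : Finset α)
    have h3 := card_pair hab
    omega
  exact ⟨fun h => gen a h (by simp), fun h => gen b h (by simp), hab⟩

lemma sd_pair_pair {a b c d : α} (hab : a ≠ b) (hcd : c ≠ d)
    (hac : a ≠ c) (had : a ≠ d) (hbc : b ≠ c) (hbd : b ≠ d) :
    (symmDiff ({a, b} : Finset α) {c, d}).card = 4 := by
  have hdisj : Disjoint ({a, b} : Finset α) {c, d} := by
    simp [Finset.disjoint_left]
    aesop
  rw [hdisj.symmDiff_eq_sup, sup_eq_union, card_union_of_disjoint hdisj,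
    card_pair hab, card_pair hcd]

lemma walk_le {k : ℕ} {S : Set (Finset (Fin k))} :
    ∀ {u v : S} (p : ((cubeGraph k).induce S).Walk u v),
      (symmDiff u.1 v.1).card ≤ p.length := by
  intro u v p
  induction p with
  | nil => simp
  | cons h q ih =>
    rename_i a b c
    have hadj : (symmDiff a.1 b.1).card = 1 := h
    calc (symmDiff a.1 c.1).card ≤ (symmDiff a.1 b.1 ∪ symmDiff b.1 c.1).card :=
          card_le_card (symmDiff_triangle _ _ _)
      _ ≤ (symmDiff a.1 b.1).card + (symmDiff b.1 c.1).card := card_union_le _ _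
      _ ≤ 1 + q.length := by rw [hadj]; omega
      _ = (SimpleGraph.Walk.cons h q).length := by simp [Nat.add_comm]

lemma dist_eq_of_walk {k : ℕ} {S : Set (Finset (Fin k))} {u v : S}
    (p : ((cubeGraph k).induce S).Walk u v) (hl : p.length = (symmDiff u.1 v.1).card) :
    ((cubeGraph k).induce S).dist u v = (symmDiff u.1 v.1).card := by
  refine le_antisymm (hl ▸ SimpleGraph.dist_le p) ?_
  obtain ⟨q, hq⟩ := SimpleGraph.Reachable.exists_walk_length_eq_dist ⟨p⟩
  exact hq ▸ walk_le q

lemma iso_dist_le {V V' : Type*} {G : SimpleGraph V} {G' : SimpleGraph V'}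
    (f : G ≃g G') (u v : V) : G'.dist (f u) (f v) ≤ G.dist u v := by
  by_cases h : G.Reachable u v
  · obtain ⟨p, hp⟩ := h.exists_walk_length_eq_dist
    calc G'.dist (f u) (f v) ≤ (p.map f.toHom).length := SimpleGraph.dist_le _
      _ = p.length := SimpleGraph.Walk.length_map _ _
      _ = G.dist u v := hp
  · rw [SimpleGraph.dist_eq_zero_of_not_reachable h,
      SimpleGraph.dist_eq_zero_of_not_reachable]
    intro hr
    exact h (by simpa using hr.map f.symm.toHom)

lemma iso_dist {V V' : Type*} {G : SimpleGraph V} {G' : SimpleGraph V'}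
    (f : G ≃g G') (u v : V) : G'.dist (f u) (f v) = G.dist u v := by
  refine le_antisymm (iso_dist_le f u v) ?_
  have h := iso_dist_le f.symm (f u) (f v)
  simpa using h

end Helpers

set_option maxHeartbeats 1000000 in
/-- If `SK_n` (`n ≥ 4`) is an isometric subgraph of a partial cube `V`, then `V`
admits an isometric embedding into a hypercube in which this `SK_n` is
standardly embedded. -/
theorem stmt8 (m n : ℕ) (hn : 4 ≤ n) (V W : Set (Finset (Fin m)))
    (hV : IsPC V) (hWV : W ⊆ V) (hW : IsPC W)
    (psi : ((cubeGraph m).induce W) ≃g ((cubeGraph n).induce (SKset n))) :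
    ∃ (m' : ℕ) (phi : Finset (Fin m) → Finset (Fin m'))
      (iota : Fin n → Fin m'), Function.Injective iota ∧
      (∀ u ∈ V, ∀ v ∈ V,
        (symmDiff (phi u) (phi v)).card = (symmDiff u v).card) ∧
      ∀ w : W, phi w.1 = Finset.image iota (psi w).1 := by
  classical
  have h0n : 0 < n := by omega
  have h1n : 1 < n := by omega
  have memS : ∀ i : Fin n, ({i} : Finset (Fin n)) ∈ SKset n := fun i => Or.inl (card_singleton i)
  have memP : ∀ i j : Fin n, ({i, j} : Finset (Fin n)) ∈ SKset n := by
    intro i j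
    by_cases h : i = j
    · subst h; left; simp
    · right; exact card_pair h
  set a : Fin n → ↥W := fun i => psi.symm ⟨{i}, memS i⟩ with ha
  set b : Fin n → Fin n → ↥W := fun i j => psi.symm ⟨{i, j}, memP i j⟩ with hb
  set A : Fin n → Finset (Fin m) := fun i => (a i).1 with hA
  set B : Fin n → Fin n → Finset (Fin m) := fun i j => (b i j).1 with hB
  have hpsia : ∀ i, psi (a i) = ⟨{i}, memS i⟩ := fun i => psi.apply_symm_apply _
  have hpsib : ∀ i j, psi (b i j) = ⟨{i, j}, memP i j⟩ := fun i j => psi.apply_symm_apply _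
  have hBsymm : ∀ i j, B i j = B j i := by
    intro i j
    simp only [hB, hb]
    congr 2
    exact Subtype.ext (Finset.pair_comm i j)
  have transfer : ∀ w1 w2 : ↥W, (symmDiff w1.1 w2.1).card
      = ((cubeGraph n).induce (SKset n)).dist (psi w1) (psi w2) := by
    intro w1 w2
    rw [iso_dist psi, hW w1 w2]
  -- adjacency helpers in SK side
  have adjP : ∀ i j : Fin n, i ≠ j →
      ((cubeGraph n).induce (SKset n)).Adj ⟨{i}, memS i⟩ ⟨{i, j}, memP i j⟩ := by
    intro i j h
    show (symmDiff ({i} : Finset (Fin n)) {i, j}).card = 1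
    rw [sd_in_pair i j h]; exact card_singleton j
  have adjQ : ∀ i j : Fin n, i ≠ j →
      ((cubeGraph n).induce (SKset n)).Adj ⟨{i, j}, memP i j⟩ ⟨{j}, memS j⟩ := by
    intro i j h
    show (symmDiff ({i, j} : Finset (Fin n)) {j}).card = 1
    rw [sd_pair_right i j h]; exact card_singleton i
  have adjR : ∀ i j : Fin n, i ≠ j →
      ((cubeGraph n).induce (SKset n)).Adj ⟨{i, j}, memP i j⟩ ⟨{i}, memS i⟩ := by
    intro i j h
    show (symmDiff ({i, j} : Finset (Fin n)) {i}).card = 1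
    rw [sd_pair_left i j h]; exact card_singleton j
  -- distance facts
  have hd1 : ∀ i j : Fin n, i ≠ j → (symmDiff (A i) (B i j)).card = 1 := by
    intro i j h
    rw [hA, hB, transfer (a i) (b i j), hpsia, hpsib]
    have := dist_eq_of_walk (SimpleGraph.Walk.cons (adjP i j h) SimpleGraph.Walk.nil)
      (by simp [sd_in_pair i j h])
    rw [this]
    simp [sd_in_pair i j h]
  have hd2 : ∀ i j : Fin n, i ≠ j → (symmDiff (A i) (A j)).card = 2 := by
    intro i j h
    rw [hA, transfer (a i) (a j), hpsia, hpsia]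
    have := dist_eq_of_walk
      (SimpleGraph.Walk.cons (adjP i j h) (SimpleGraph.Walk.cons (adjQ i j h) SimpleGraph.Walk.nil))
      (by simp [sd_singleton i j h, card_pair h])
    rw [this]
    simp [sd_singleton i j h, card_pair h]
  have hd3 : ∀ i j k : Fin n, i ≠ j → i ≠ k → j ≠ k →
      (symmDiff (B i j) (B i k)).card = 2 := by
    intro i j k hij hik hjk
    rw [hB, transfer (b i j) (b i k), hpsib, hpsib]
    have hsd : symmDiff ({i, j} : Finset (Fin n)) {i, k} = {j, k} := sd_pair_mid i j k hij hik hjk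
    have := dist_eq_of_walk
      (SimpleGraph.Walk.cons (adjR i j hij) (SimpleGraph.Walk.cons (adjP i k hik) SimpleGraph.Walk.nil))
      (by simp [hsd, card_pair hjk])
    rw [this]
    simp [hsd, card_pair hjk]
  have hd4 : ∀ i j k l : Fin n, i ≠ j → i ≠ k → i ≠ l → j ≠ k → j ≠ l → k ≠ l →
      (symmDiff (B i j) (B k l)).card = 4 := by
    intro i j k l hij hik hil hjk hjl hkl
    rw [hB, transfer (b i j) (b k l), hpsib, hpsib]
    have hsd : (symmDiff ({i, j} : Finset (Fin n)) {k, l}).card = 4 :=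
      sd_pair_pair hij hkl hik hil hjk hjl
    have := dist_eq_of_walk
      (SimpleGraph.Walk.cons (adjR i j hij)
        (SimpleGraph.Walk.cons (adjP i k hik)
          (SimpleGraph.Walk.cons (adjQ i k hik)
            (SimpleGraph.Walk.cons (adjP k l hkl) SimpleGraph.Walk.nil))))
      (by simp [hsd])
    rw [this, hsd]
  -- the coordinates t i j
  have hmne : Nonempty (Fin m) := by
    have h2 := hd2 ⟨0, h0n⟩ ⟨1, h1n⟩ (by simp [Fin.ext_iff])
    have : (symmDiff (A ⟨0, h0n⟩) (A ⟨1, h1n⟩)).Nonempty := by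
      rw [← card_pos, h2]; omega
    exact ⟨this.choose⟩
  have ht : ∀ i j : Fin n, ∃ x : Fin m, i ≠ j → symmDiff (A i) (B i j) = {x} := by
    intro i j
    by_cases h : i = j
    · exact ⟨Classical.arbitrary _, fun h' => (h' h).elim⟩
    · obtain ⟨x, hx⟩ := Finset.card_eq_one.mp (hd1 i j h)
      exact ⟨x, fun _ => hx⟩
  choose t htt using ht
  have htB : ∀ i j : Fin n, i ≠ j → B i j = symmDiff (A i) {t i j} := by
    intro i j h
    rw [← htt i j h, symmDiff_symmDiff_cancel_left]
  have htB' : ∀ i j : Fin n, i ≠ j → B i j = symmDiff (A j) {t j i} := by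
    intro i j h
    rw [hBsymm i j]; exact htB j i h.symm
  have hDsd : ∀ i j : Fin n, i ≠ j →
      symmDiff (A i) (A j) = symmDiff ({t i j} : Finset (Fin m)) {t j i} := by
    intro i j h
    have h1 : symmDiff (A i) {t i j} = symmDiff (A j) {t j i} := by
      rw [← htB i j h, htB' i j h]
    have h2 : symmDiff (symmDiff (A i) (A j)) (symmDiff ({t i j} : Finset (Fin m)) {t j i}) = ⊥ := by
      rw [← sd_comm4, h1, symmDiff_self]
    exact symmDiff_eq_bot.mp h2
  have htne : ∀ i j : Fin n, i ≠ j → t i j ≠ t j i := by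
    intro i j h heq
    have h2 := hd2 i j h
    rw [hDsd i j h, heq, symmDiff_self] at h2
    simp at h2
  have hDpair : ∀ i j : Fin n, i ≠ j →
      symmDiff (A i) (A j) = {t i j, t j i} := by
    intro i j h
    rw [hDsd i j h, sd_singleton _ _ (htne i j h)]
  have tinj : ∀ i j k : Fin n, i ≠ j → i ≠ k → j ≠ k → t i j ≠ t i k := by
    intro i j k hij hik hjk heq
    have h2 := hd3 i j k hij hik hjk
    rw [htB i j hij, htB i k hik, sd_cancel_left, heq, symmDiff_self] at h2
    simp at h2
  have hsep : ∀ i j k l : Fin n, i ≠ j → i ≠ k → i ≠ l → j ≠ k → j ≠ l → k ≠ l →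
      t i j ∉ ({t i k, t k i} : Finset (Fin m)) ∧
      t k l ∉ ({t i k, t k i} : Finset (Fin m)) ∧ t i j ≠ t k l := by
    intro i j k l hij hik hil hjk hjl hkl
    have h4 := hd4 i j k l hij hik hil hjk hjl hkl
    rw [htB i j hij, htB k l hkl, sd_comm4] at h4
    have h2 : (symmDiff (A i) (A k)).card = 2 := hd2 i k hik
    have := keyX h2 h4
    rw [hDpair i k hik] at this
    exact this
  -- the main claim
  have main : ∀ i j k : Fin n, i ≠ j → i ≠ k → j ≠ k → t i j = t k j := by
    intro i j k hij hik hjk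
    by_contra hne
    obtain ⟨l, hli, hlj, hlk⟩ : ∃ l : Fin n, l ≠ i ∧ l ≠ j ∧ l ≠ k := by
      by_contra hcon
      push_neg at hcon
      have hsub : (Finset.univ : Finset (Fin n)) ⊆ {i, j, k} := by
        intro x _
        simp only [mem_insert, mem_singleton]
        by_cases hxi : x = i
        · tauto
        by_cases hxj : x = j
        · tauto
        · exact Or.inr (Or.inr (hcon x hxi hxj))
      have hc1 := card_le_card hsub
      have hc2 : ({i, j, k} : Finset (Fin n)).card ≤ 3 := by
        refine le_trans (card_insert_le _ _) ?_
        refine le_trans (Nat.add_le_add_right (card_insert_le _ _) 1) ?_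
        simp
      rw [card_univ, Fintype.card_fin] at hc1
      omega
    -- facts
    have N1 := (hsep j i k l hij.symm hjk hlj.symm hik hli.symm hlk.symm).1
    rw [mem_insert, mem_singleton] at N1
    push_neg at N1
    have N2 := (hsep j k i l hjk hij.symm hlj.symm hik.symm hlk.symm hli.symm).1
    rw [mem_insert, mem_singleton] at N2
    push_neg at N2
    have tji_tjk : t j i ≠ t j k := tinj j i k hij.symm hjk hik
    have hcard4 : (symmDiff ({t i j, t j i} : Finset (Fin m)) {t j k, t k j}).card = 4 :=
      sd_pair_pair (htne i j hij) (htne j k hjk)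
        (fun h => N2.2 h.symm) hne tji_tjk N1.2
    have hcomb : symmDiff ({t i j, t j i} : Finset (Fin m)) {t j k, t k j}
        = symmDiff (A i) (A k) := by
      rw [← hDpair i j hij, ← hDpair j k hjk, sd_cancel_mid]
    rw [hcomb, hd2 i k hik] at hcard4
    omega
  -- define e
  set idx0 : Fin n := ⟨0, h0n⟩ with hidx0
  set idx1 : Fin n := ⟨1, h1n⟩ with hidx1
  have hidxne : idx1 ≠ idx0 := by simp [hidx0, hidx1, Fin.ext_iff]
  set pick : Fin n → Fin n := fun j => if j = idx0 then idx1 else idx0 with hpickdef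
  have hpick : ∀ j, pick j ≠ j := by
    intro j
    by_cases h : j = idx0
    · simp [hpickdef, h, hidxne]
    · simp [hpickdef, h]
      exact fun hc => h hc.symm
  set e : Fin n → Fin m := fun j => t (pick j) j with he_def
  have he : ∀ i j : Fin n, i ≠ j → t i j = e j := by
    intro i j hij
    by_cases h : i = pick j
    · rw [he_def, h]
    · exact main i j (pick j) hij h (fun hc => (hpick j) hc.symm)
  have einj : Function.Injective e := by
    intro i j heq
    by_contra hne
    have h1 := htne i j hne
    rw [he i j hne, he j i (Ne.symm hne)] at h1
    exact h1 heq.symm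
  have ene : ∀ i j : Fin n, i ≠ j → e i ≠ e j := fun i j h hc => h (einj hc)
  set C : Finset (Fin m) := symmDiff (A idx0) {e idx0} with hC
  have hCA : ∀ i, A i = symmDiff C {e i} := by
    intro i
    by_cases h : i = idx0
    · subst h
      rw [hC, symmDiff_symmDiff_cancel_right]
    · have hD0 : symmDiff (A idx0) (A i) = {e i, e idx0} := by
        rw [hDpair idx0 i (fun hc => h hc.symm), he idx0 i (fun hc => h hc.symm),
          he i idx0 h]
      have hAi : A i = symmDiff (A idx0) {e i, e idx0} := by
        rw [← hD0, symmDiff_symmDiff_cancel_left]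
      rw [hAi, hC, symmDiff_assoc]
      congr 1
      rw [sd_singleton _ _ (ene idx0 i (fun hc => h hc.symm))]
      exact Finset.pair_comm _ _
  have hCB : ∀ i j : Fin n, i ≠ j → B i j = symmDiff C {e i, e j} := by
    intro i j h
    rw [htB i j h, he i j h, hCA i, symmDiff_assoc, ← sd_singleton (e i) (e j) (ene i j h)]
  -- conclusion
  refine ⟨m, fun X => symmDiff X C, e, einj, ?_, ?_⟩
  · intro u _ v _
    rw [sd_cancel_right]
  · intro w
    rcases (psi w).2 with h1 | h2
    · obtain ⟨i, hi⟩ := Finset.card_eq_one.mp h1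
      have hw : w = a i := by
        have : psi w = ⟨{i}, memS i⟩ := Subtype.ext hi
        have h2 := congrArg psi.symm this
        rw [psi.symm_apply_apply] at h2
        exact h2
      show symmDiff w.1 C = Finset.image e (psi w).1
      rw [hi, Finset.image_singleton, hw]
      show symmDiff (A i) C = {e i}
      rw [hCA i, symmDiff_comm C {e i}, symmDiff_symmDiff_cancel_right]
    · obtain ⟨i, j, hij, hpair⟩ := Finset.card_eq_two.mp h2
      have hw : w = b i j := by
        have : psi w = ⟨{i, j}, memP i j⟩ := Subtype.ext hpair
        have h3 := congrArg psi.symm this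
        rw [psi.symm_apply_apply] at h3
        exact h3
      show symmDiff w.1 C = Finset.image e (psi w).1
      rw [hpair, hw]
      show symmDiff (B i j) C = Finset.image e {i, j}
      rw [hCB i j hij, symmDiff_comm C _, symmDiff_symmDiff_cancel_right]
      simp [Finset.image_insert]
end

section
/- If D is a pseudo-disk in F(Q_3) with boundary cycle C = ∂D, then the set A_D of vertices of D having an antipode in D equals C. (A vertex v has antipode −v if D = conv(v, −v).) -/
open Finset

open Fin.NatCast Fin.CommRing
namespace PD14
variable {m : ℕ}

variable {m : ℕ}

lemma hdist_comm (a b : Finset (Fin m)) : hdist a b = hdist b a := by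
  unfold hdist; rw [symmDiff_comm]

lemma hdist_self (a : Finset (Fin m)) : hdist a a = 0 := by
  simp [hdist]

lemma hdist_eq_zero {a b : Finset (Fin m)} (h : hdist a b = 0) : a = b := by
  unfold hdist at h
  rw [Finset.card_eq_zero] at h
  have := symmDiff_eq_bot.mp (by simpa using h)
  exact this

lemma hdist_formula (a x b : Finset (Fin m)) :
    hdist a x + hdist x b = hdist a b + 2 * ((symmDiff a x) ∩ (symmDiff x b)).card := by
  classical
  set U := symmDiff a x with hU
  set V := symmDiff x b with hV
  have hab : symmDiff a b = symmDiff U V := by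
    rw [hU, hV, symmDiff_assoc, symmDiff_symmDiff_cancel_left]
  have h1 : U.card + V.card = (U ∪ V).card + (U ∩ V).card :=
    (Finset.card_union_add_card_inter U V).symm
  have h2 : (symmDiff U V).card + (U ∩ V).card = (U ∪ V).card := by
    have : symmDiff U V = (U ∪ V) \ (U ∩ V) := symmDiff_eq_sup_sdiff_inf U V
    rw [this, Finset.card_sdiff_of_subset (Finset.inter_subset_union)]
    have h3 : (U ∩ V).card ≤ (U ∪ V).card := Finset.card_le_card Finset.inter_subset_union
    omega
  unfold hdist
  rw [hab, ← hU, ← hV]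
  omega

def Btw (a x b : Finset (Fin m)) : Prop := hdist a x + hdist x b = hdist a b

lemma btw_iff {a x b : Finset (Fin m)} : Btw a x b ↔ a ∩ b ⊆ x ∧ x ⊆ a ∪ b := by
  classical
  have hf := hdist_formula a x b
  constructor
  · intro h
    have hc : ((symmDiff a x) ∩ (symmDiff x b)).card = 0 := by unfold Btw at h; omega
    rw [Finset.card_eq_zero] at hc
    constructor
    · intro i hi
      by_contra hix
      have : i ∈ (symmDiff a x) ∩ (symmDiff x b) := by
        simp only [Finset.mem_inter, Finset.mem_symmDiff]
        simp only [Finset.mem_inter] at hi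
        tauto
      rw [hc] at this; exact absurd this (Finset.notMem_empty i)
    · intro i hi
      by_contra hix
      simp only [Finset.mem_union] at hix
      push_neg at hix
      have : i ∈ (symmDiff a x) ∩ (symmDiff x b) := by
        simp only [Finset.mem_inter, Finset.mem_symmDiff]
        tauto
      rw [hc] at this; exact absurd this (Finset.notMem_empty i)
  · rintro ⟨h1, h2⟩
    have hc : (symmDiff a x) ∩ (symmDiff x b) = ∅ := by
      rw [Finset.eq_empty_iff_forall_notMem]
      intro i hi
      simp only [Finset.mem_inter, Finset.mem_symmDiff] at hi
      have hx1 := @h1 i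
      have hx2 := @h2 i
      simp only [Finset.mem_inter, Finset.mem_union] at hx1 hx2
      tauto
    unfold Btw
    rw [hc] at hf
    simp only [Finset.card_empty, Nat.mul_zero, Nat.add_zero] at hf
    exact hf

lemma btw_self_left (a b : Finset (Fin m)) : Btw a a b := by
  unfold Btw; rw [hdist_self]; omega

lemma btw_self_right (a b : Finset (Fin m)) : Btw a b b := by
  unfold Btw; rw [hdist_self]; omega

lemma btw_trans {a b x y z : Finset (Fin m)} (hx : Btw a x b) (hy : Btw a y b)
    (hz : Btw x z y) : Btw a z b := by
  rw [btw_iff] at *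
  obtain ⟨hx1, hx2⟩ := hx
  obtain ⟨hy1, hy2⟩ := hy
  obtain ⟨hz1, hz2⟩ := hz
  constructor
  · intro i hi
    exact hz1 (Finset.mem_inter.mpr ⟨hx1 hi, hy1 hi⟩)
  · intro i hi
    rcases Finset.mem_union.mp (hz2 hi) with h | h
    · exact hx2 h
    · exact hy2 h

lemma diff_subset_of_btw {v w x y : Finset (Fin m)} (hx : Btw v x w) (hy : Btw v y w) :
    symmDiff x y ⊆ symmDiff v w := by
  rw [btw_iff] at hx hy
  intro i hi
  rw [Finset.mem_symmDiff] at hi ⊢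
  have h1 := @hx.1 i
  have h2 := @hx.2 i
  have h3 := @hy.1 i
  have h4 := @hy.2 i
  simp only [Finset.mem_inter, Finset.mem_union] at h1 h2 h3 h4
  tauto

lemma hdist_step {v x y : Finset (Fin m)} (h : hdist x y = 1) :
    hdist v y = hdist v x + 1 ∨ hdist v x = hdist v y + 1 := by
  have h1 := hdist_formula v x y
  have h2 := hdist_formula v y x
  rw [hdist_comm y x] at h2
  rw [h] at h1 h2
  omega

end PD14

section Hull
variable {m : ℕ} {D : Set (Finset (Fin m))}

lemma convex_self : IsConvexIn D D :=
  ⟨le_refl _, fun _ _ _ _ x hx _ => hx⟩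

lemma subset_hull {S : Set (Finset (Fin m))} : S ⊆ convexHullIn D S :=
  fun x hx => Set.mem_sInter.mpr (fun _ hT => hT.1 hx)

lemma hull_min {S T : Set (Finset (Fin m))} (h1 : S ⊆ T) (h2 : IsConvexIn D T) :
    convexHullIn D S ⊆ T :=
  Set.sInter_subset_of_mem ⟨h1, h2⟩

lemma hull_subset_base {S : Set (Finset (Fin m))} (h : S ⊆ D) :
    convexHullIn D S ⊆ D := hull_min h convex_self

lemma hull_convex {S : Set (Finset (Fin m))} (h : S ⊆ D) :
    IsConvexIn D (convexHullIn D S) := by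
  constructor
  · exact hull_subset_base h
  · intro u hu v hv x hx hbtw
    simp only [convexHullIn, Set.mem_sInter] at hu hv ⊢
    intro T hT
    exact hT.2.2 u (hu T hT) v (hv T hT) x hx hbtw

/-- The interval `I(a,b) ∩ D` is convex in `D`. -/
lemma interval_convex (a b : Finset (Fin m)) :
    IsConvexIn D {x | x ∈ D ∧ PD14.Btw a x b} := by
  constructor
  · exact fun x hx => hx.1
  · rintro u ⟨huD, hu⟩ v ⟨hvD, hv⟩ x hxD hbtw
    exact ⟨hxD, PD14.btw_trans hu hv hbtw⟩

/-- If the hull of `{v, w}` is all of `D`, then `D ⊆ I(v,w)`. -/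
lemma btw_of_hull_eq {v w : Finset (Fin m)} (hv : v ∈ D) (hw : w ∈ D)
    (h : convexHullIn D {v, w} = D) : ∀ x ∈ D, PD14.Btw v x w := by
  intro x hx
  have hsub : convexHullIn D {v, w} ⊆ {x | x ∈ D ∧ PD14.Btw v x w} := by
    apply hull_min _ (interval_convex v w)
    rintro y (rfl | rfl)
    · exact ⟨hv, PD14.btw_self_left _ _⟩
    · exact ⟨hw, PD14.btw_self_right _ _⟩
  rw [h] at hsub
  exact (hsub hx).2

end Hull

namespace PD14
section Cyc
variable {k : ℕ} [NeZero k]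

def cycd (i j : Fin k) : ℕ := min (j - i).val (i - j).val

lemma sub_val' (i j : Fin k) :
    (j - i).val = if i.val ≤ j.val then j.val - i.val else k + j.val - i.val := by
  rw [Fin.sub_def]
  have hi := i.isLt
  have hj := j.isLt
  show (k - i.val + j.val) % k = _
  split_ifs with h
  · have h2 : (k - i.val) + j.val = (j.val - i.val) + k := by omega
    rw [h2, Nat.add_mod_right, Nat.mod_eq_of_lt (by omega)]
  · rw [Nat.mod_eq_of_lt (by omega)]
    omega

lemma cycd_val (i j : Fin k) : cycd i j = min (j - i).val (k - (j - i).val) := by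
  have h1 := sub_val' i j
  have h2 := sub_val' j i
  have hi := i.isLt
  have hj := j.isLt
  unfold cycd
  split_ifs at h1 h2 <;> omega

lemma cycd_comm (i j : Fin k) : cycd i j = cycd j i := by
  unfold cycd; omega

lemma cycd_self (i : Fin k) : cycd i i = 0 := by
  unfold cycd; simp

lemma cycd_eq_zero {i j : Fin k} (h : cycd i j = 0) : i = j := by
  have h1 := sub_val' i j
  have h2 := sub_val' j i
  have hi := i.isLt
  have hj := j.isLt
  unfold cycd at h
  have : i.val = j.val := by split_ifs at h1 h2 <;> omega
  exact Fin.ext this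

lemma cycd_add_one (hk3 : 3 ≤ k) (a : Fin k) : cycd a (a + 1) = 1 := by
  rw [cycd_val, add_sub_cancel_left]
  rw [Fin.val_one' k, Nat.mod_eq_of_lt (by omega)]
  omega

lemma cycd_lip (hk3 : 3 ≤ k) (i j : Fin k) :
    cycd i j ≤ cycd (i + 1) j + 1 ∧ cycd i j ≤ cycd (i - 1) j + 1 := by
  have e1 : j - (i + 1) = (j - i) - 1 := by ring
  have e2 : j - (i - 1) = (j - i) + 1 := by ring
  rw [cycd_val, cycd_val, cycd_val, e1, e2]
  have h1 : (1 : Fin k).val = 1 := by rw [Fin.val_one' k, Nat.mod_eq_of_lt (by omega)]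
  set a := j - i with ha
  have hsub : (a - 1).val = if a.val = 0 then k - 1 else a.val - 1 := by
    rw [sub_val', h1]
    have := a.isLt
    split_ifs <;> omega
  have hadd : (a + 1).val = if a.val = k - 1 then 0 else a.val + 1 := by
    rw [Fin.val_add, h1]
    have := a.isLt
    split_ifs with h
    · rw [h]; simp [Nat.sub_add_cancel (by omega : 1 ≤ k)]
    · rw [Nat.mod_eq_of_lt (by omega)]
  have := a.isLt
  split_ifs at hsub hadd <;> omega

end Cyc

section GraphDist
open SimpleGraph

lemma dist_le_iso {V W : Type*} {G : SimpleGraph V} {H : SimpleGraph W} (φ : G ≃g H)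
    (u v : V) : H.dist (φ u) (φ v) ≤ G.dist u v := by
  by_cases h : G.Reachable u v
  · obtain ⟨p, hp⟩ := h.exists_walk_length_eq_dist
    calc H.dist (φ u) (φ v) ≤ (p.map φ.toHom).length := SimpleGraph.dist_le _
      _ = p.length := SimpleGraph.Walk.length_map _ _
      _ = G.dist u v := hp
  · have h' : ¬ H.Reachable (φ u) (φ v) := by
      intro hr
      have h2 := hr.map φ.symm.toHom
      rw [show φ.symm.toHom (φ u) = u from φ.symm_apply_apply u,
          show φ.symm.toHom (φ v) = v from φ.symm_apply_apply v] at h2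
      exact h h2
    rw [SimpleGraph.dist_eq_zero_of_not_reachable h,
      SimpleGraph.dist_eq_zero_of_not_reachable h']

lemma dist_iso {V W : Type*} {G : SimpleGraph V} {H : SimpleGraph W} (φ : G ≃g H)
    (u v : V) : H.dist (φ u) (φ v) = G.dist u v := by
  refine le_antisymm (dist_le_iso φ u v) ?_
  have := dist_le_iso φ.symm (φ u) (φ v)
  simpa using this

variable {k : ℕ}

lemma cycle_adj_add_one [NeZero k] (hk3 : 3 ≤ k) (a : Fin k) :
    (cycleGraph k).Adj a (a + 1) := by
  rw [SimpleGraph.cycleGraph_adj']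
  right
  rw [add_sub_cancel_left, Fin.val_one' k, Nat.mod_eq_of_lt (by omega)]

lemma cycle_connected (hk3 : 3 ≤ k) : (cycleGraph k).Connected := by
  obtain ⟨k', rfl⟩ : ∃ k', k = k' + 1 := ⟨k - 1, by omega⟩
  exact SimpleGraph.cycleGraph_connected

lemma cycle_dist_le [NeZero k] (hk3 : 3 ≤ k) (i : Fin k) (t : ℕ) :
    (cycleGraph k).dist i (i + (t : Fin k)) ≤ t := by
  induction t with
  | zero => simp
  | succ t ih =>
    have hconn := cycle_connected hk3
    have htri := hconn.dist_triangle (u := i) (v := i + (t : Fin k)) (w := i + ((t+1 : ℕ) : Fin k))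
    have hcast : ((t+1 : ℕ) : Fin k) = (t : Fin k) + 1 := by push_cast; ring
    have hadj : (cycleGraph k).Adj (i + (t : Fin k)) (i + ((t+1:ℕ) : Fin k)) := by
      rw [hcast, ← add_assoc]
      exact cycle_adj_add_one hk3 _
    have h1 : (cycleGraph k).dist (i + (t : Fin k)) (i + ((t+1:ℕ) : Fin k)) = 1 :=
      SimpleGraph.dist_eq_one_iff_adj.mpr hadj
    omega

lemma cycle_walk_ge [NeZero k] (hk3 : 3 ≤ k) {i j : Fin k} (p : (cycleGraph k).Walk i j) :
    cycd i j ≤ p.length := by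
  induction p with
  | nil => simp [cycd_self]
  | @cons a b c hadj q ih =>
    rw [SimpleGraph.cycleGraph_adj'] at hadj
    have hlip := cycd_lip hk3 a c
    have hone : (1 : Fin k).val = 1 := by rw [Fin.val_one' k, Nat.mod_eq_of_lt (by omega)]
    simp only [SimpleGraph.Walk.length_cons]
    rcases hadj with h | h
    · have h1 : a - b = 1 := Fin.ext (by rw [hone]; exact h)
      have ha : a = b + 1 := by rw [← h1]; ring
      subst ha
      have hlip2 := cycd_lip hk3 (b + 1) c
      have hred : b + 1 - 1 = b := by ring
      rw [hred] at hlip2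
      omega
    · have h1 : b - a = 1 := Fin.ext (by rw [hone]; exact h)
      have hb : b = a + 1 := by rw [← h1]; ring
      subst hb
      omega

lemma cycle_dist [NeZero k] (hk3 : 3 ≤ k) (i j : Fin k) :
    (cycleGraph k).dist i j = cycd i j := by
  refine le_antisymm ?_ ?_
  · have h1 : (cycleGraph k).dist i j ≤ (j - i).val := by
      have := cycle_dist_le hk3 i (j - i).val
      rwa [Fin.cast_val_eq_self, add_sub_cancel] at this
    have h2 : (cycleGraph k).dist i j ≤ (i - j).val := by
      have := cycle_dist_le hk3 j (i - j).val
      rw [Fin.cast_val_eq_self, add_sub_cancel] at this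
      rwa [SimpleGraph.dist_comm] at this
    unfold cycd
    omega
  · obtain ⟨p, hp⟩ := ((cycle_connected hk3) i j).exists_walk_length_eq_dist
    rw [← hp]
    exact cycle_walk_ge hk3 p

end GraphDist
end PD14

namespace PD14
variable {m : ℕ}

lemma inter_symmDiff (U V Y : Finset (Fin m)) :
    (symmDiff U V) ∩ Y = symmDiff (U ∩ Y) (V ∩ Y) := by
  ext x
  simp only [Finset.mem_inter, Finset.mem_symmDiff]
  tauto

lemma symmDiff_singleton_card {S : Finset (Fin m)} {e : Fin m} (h : e ∈ S) :
    (symmDiff S {e}).card + 1 = S.card := by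
  have h1 : symmDiff S {e} = S.erase e := by
    ext x
    simp only [Finset.mem_symmDiff, Finset.mem_singleton, Finset.mem_erase]
    constructor
    · rintro (⟨h1, h2⟩ | ⟨rfl, h2⟩)
      · exact ⟨h2, h1⟩
      · exact absurd h h2
    · rintro ⟨h1, h2⟩
      exact Or.inl ⟨h2, h1⟩
  rw [h1, Finset.card_erase_of_mem h]
  have : 0 < S.card := Finset.card_pos.mpr ⟨e, h⟩
  omega

end PD14

/-- In a pseudo-disk `D ∈ F(Q_3)` with boundary cycle `C`, the set of vertices
of `D` having an antipode in `D` is exactly `C`. -/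
theorem stmt14 (m k : ℕ) (hk : 3 ≤ k) (D C : Set (Finset (Fin m)))
    (hD : IsPC D) (hvc : VCdimLE D 2) (hCD : C ⊆ D) (hC : IsPC C)
    (hcyc : Nonempty (((cubeGraph m).induce C) ≃g SimpleGraph.cycleGraph k))
    (hconv : convexHullIn D C = D) :
    {v | v ∈ D ∧ ∃ w ∈ D, convexHullIn D {v, w} = D} = C := by
  classical
  haveI : NeZero k := ⟨by omega⟩
  obtain ⟨φ⟩ := hcyc
  set c : Fin k → Finset (Fin m) := fun i => ((φ.symm i : C) : Finset (Fin m)) with hcdef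
  have c_mem : ∀ i, c i ∈ C := fun i => (φ.symm i).2
  have c_memD : ∀ i, c i ∈ D := fun i => hCD (c_mem i)
  have hdist_c : ∀ i j, hdist (c i) (c j) = PD14.cycd i j := by
    intro i j
    have h1 := hC (φ.symm i) (φ.symm j)
    have h2 := PD14.dist_iso φ (φ.symm i) (φ.symm j)
    rw [φ.apply_symm_apply, φ.apply_symm_apply, PD14.cycle_dist hk] at h2
    simp only [hcdef]
    unfold hdist
    rw [← h1, ← h2]
  have c_surjC : ∀ x ∈ C, ∃ i, c i = x := by
    intro x hx
    refine ⟨φ ⟨x, hx⟩, ?_⟩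
    simp only [hcdef]
    rw [φ.symm_apply_apply]
  -- step distances
  have hstep1 : ∀ a : Fin k, hdist (c a) (c (a + 1)) = 1 := fun a => by
    rw [hdist_c]; exact PD14.cycd_add_one hk a
  -- k is even
  have hpar : ∀ t : ℕ, hdist (c 0) (c (t : Fin k)) % 2 = t % 2 := by
    intro t
    induction t with
    | zero =>
      have : ((0:ℕ) : Fin k) = (0 : Fin k) := by simp
      rw [this, PD14.hdist_self]
    | succ t ih =>
      have hcast : ((t+1 : ℕ) : Fin k) = (t : Fin k) + 1 := by push_cast; ring
      have h1 := PD14.hdist_step (v := c 0) (hstep1 ((t : Fin k)))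
      rw [← hcast] at h1
      omega
  have hkeven : k % 2 = 0 := by
    have h1 := hpar k
    rw [show ((k : ℕ) : Fin k) = (0 : Fin k) from by simp, PD14.hdist_self] at h1
    omega
  obtain ⟨n, hn⟩ : ∃ n, k = 2 * n := ⟨k / 2, by omega⟩
  have hn2 : 2 ≤ n := by omega
  -- general shift distance formula
  have hshift : ∀ (i : Fin k) (t : ℕ),
      hdist (c i) (c (i + (t : Fin k))) = min (t % k) (k - t % k) := by
    intro i t
    rw [hdist_c, PD14.cycd_val, add_sub_cancel_left, Fin.val_natCast]
  -- F5 : each boundary vertex has its cycle-antipode as antipode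
  have hF5 : ∀ i : Fin k, convexHullIn D {c i, c (i + ((n:ℕ) : Fin k))} = D := by
    intro i
    have hpair : ({c i, c (i + ((n:ℕ) : Fin k))} : Set (Finset (Fin m))) ⊆ D := by
      rintro x (rfl | rfl)
      · exact c_memD i
      · exact c_memD _
    refine subset_antisymm (hull_subset_base hpair) ?_
    have hconv' := hull_convex hpair
    suffices hCH : C ⊆ convexHullIn D {c i, c (i + ((n:ℕ) : Fin k))} by
      intro x hx
      exact hull_min hCH hconv' (show x ∈ convexHullIn D C by rw [hconv]; exact hx)
    have hciH : c i ∈ convexHullIn D {c i, c (i + ((n:ℕ) : Fin k))} :=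
      subset_hull (by simp)
    have hwH : c (i + ((n:ℕ) : Fin k)) ∈ convexHullIn D {c i, c (i + ((n:ℕ) : Fin k))} :=
      subset_hull (by simp)
    have harc : ∀ t : ℕ, t ≤ n →
        c (i + ((t:ℕ) : Fin k)) ∈ convexHullIn D {c i, c (i + ((n:ℕ) : Fin k))} ∧
        c (i - ((t:ℕ) : Fin k)) ∈ convexHullIn D {c i, c (i + ((n:ℕ) : Fin k))} := by
      intro t
      induction t with
      | zero =>
        intro _
        constructor <;> simpa using hciH
      | succ t ih =>
        intro ht
        obtain ⟨ih1, ih2⟩ := ih (by omega)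
        constructor
        · -- forward arc
          have e1 : hdist (c (i + ((t:ℕ):Fin k))) (c (i + ((t+1:ℕ):Fin k))) = 1 := by
            have hx : i + ((t+1:ℕ):Fin k) = (i + ((t:ℕ):Fin k)) + 1 := by push_cast; ring
            rw [hx]; exact hstep1 _
          have e2 : hdist (c (i + ((t+1:ℕ):Fin k))) (c (i + ((n:ℕ):Fin k))) = n - (t+1) := by
            have hx : i + ((n:ℕ):Fin k) = (i + ((t+1:ℕ):Fin k)) + ((n - (t+1) : ℕ) : Fin k) := by
              rw [add_assoc, ← Nat.cast_add, show (t+1) + (n - (t+1)) = n by omega]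
            rw [hx, hshift, Nat.mod_eq_of_lt (by omega)]
            omega
          have e3 : hdist (c (i + ((t:ℕ):Fin k))) (c (i + ((n:ℕ):Fin k))) = n - t := by
            have hx : i + ((n:ℕ):Fin k) = (i + ((t:ℕ):Fin k)) + ((n - t : ℕ) : Fin k) := by
              rw [add_assoc, ← Nat.cast_add, show t + (n - t) = n by omega]
            rw [hx, hshift, Nat.mod_eq_of_lt (by omega)]
            omega
          refine hconv'.2 _ ih1 _ hwH _ (c_memD _) ?_
          show hdist _ _ + hdist _ _ = hdist _ _
          rw [e1, e2, e3]
          omega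
        · -- backward arc
          have e1 : hdist (c (i - ((t:ℕ):Fin k))) (c (i - ((t+1:ℕ):Fin k))) = 1 := by
            have hx : i - ((t:ℕ):Fin k) = (i - ((t+1:ℕ):Fin k)) + 1 := by push_cast; ring
            rw [PD14.hdist_comm, hx]
            exact hstep1 _
          have e2 : hdist (c (i - ((t+1:ℕ):Fin k))) (c (i + ((n:ℕ):Fin k))) = n - (t+1) := by
            have hx : i + ((n:ℕ):Fin k) = (i - ((t+1:ℕ):Fin k)) + ((n + (t+1) : ℕ) : Fin k) := by
              push_cast; ring
            rw [hx, hshift]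
            rcases eq_or_lt_of_le (show n + (t+1) ≤ k by omega) with hE | hE
            · rw [hE, Nat.mod_self]; omega
            · rw [Nat.mod_eq_of_lt hE]; omega
          have e3 : hdist (c (i - ((t:ℕ):Fin k))) (c (i + ((n:ℕ):Fin k))) = n - t := by
            have hx : i + ((n:ℕ):Fin k) = (i - ((t:ℕ):Fin k)) + ((n + t : ℕ) : Fin k) := by
              push_cast; ring
            rw [hx, hshift, Nat.mod_eq_of_lt (by omega)]
            omega
          refine hconv'.2 _ ih2 _ hwH _ (c_memD _) ?_
          show hdist _ _ + hdist _ _ = hdist _ _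
          rw [e1, e2, e3]
          omega
    intro x hx
    obtain ⟨j, rfl⟩ := c_surjC x hx
    set t0 := (j - i).val with ht0
    have ht0k : t0 < k := (j - i).isLt
    by_cases hcase : t0 ≤ n
    · have hj : i + ((t0:ℕ) : Fin k) = j := by
        rw [ht0, Fin.cast_val_eq_self]; ring
      have := (harc t0 hcase).1
      rwa [hj] at this
    · have hle : k - t0 ≤ n := by omega
      have hsum : ((k - t0 : ℕ) : Fin k) + ((t0:ℕ) : Fin k) = 0 := by
        rw [← Nat.cast_add, show k - t0 + t0 = k by omega]
        exact Fin.natCast_self k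
      have hneg : ((k - t0 : ℕ) : Fin k) = - ((t0:ℕ) : Fin k) :=
        eq_neg_of_add_eq_zero_left hsum
      have hj : i - ((k - t0 : ℕ) : Fin k) = j := by
        rw [hneg, sub_neg_eq_add, ht0, Fin.cast_val_eq_self]; ring
      have := (harc (k - t0) hle).2
      rwa [hj] at this
  -- antipodal intervals on the boundary
  have hant : ∀ (i : Fin k), ∀ x ∈ D, PD14.Btw (c i) x (c (i + ((n:ℕ):Fin k))) :=
    fun i => btw_of_hull_eq (c_memD i) (c_memD _) (hF5 i)
  have hdiffs : ∀ (i : Fin k), ∀ x ∈ D, ∀ y ∈ D,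
      symmDiff x y ⊆ symmDiff (c i) (c (i + ((n:ℕ):Fin k))) :=
    fun i x hx y hy => PD14.diff_subset_of_btw (hant i x hx) (hant i y hy)
  -- main set equality
  ext v
  simp only [Set.mem_setOf_eq]
  constructor
  · rintro ⟨hvD, w, hwD, hvw⟩
    by_contra hvC
    have hbtwvw : ∀ x ∈ D, PD14.Btw v x w := btw_of_hull_eq hvD hwD hvw
    have hdvw : ∀ x ∈ D, ∀ y ∈ D, symmDiff x y ⊆ symmDiff v w :=
      fun x hx y hy => PD14.diff_subset_of_btw (hbtwvw x hx) (hbtwvw y hy)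
    obtain ⟨j0, -, hj0min⟩ := Finset.exists_min_image Finset.univ
      (fun j => hdist v (c j)) ⟨0, Finset.mem_univ 0⟩
    have hd1 : 1 ≤ hdist v (c j0) := by
      rcases Nat.eq_zero_or_pos (hdist v (c j0)) with h0 | h
      · exact absurd (by rw [PD14.hdist_eq_zero h0]; exact c_mem j0) hvC
      · exact h
    set d := hdist v (c j0) with hddef
    -- neighbours
    have hp1 : hdist (c j0) (c (j0 + 1)) = 1 := hstep1 j0
    have hm1 : hdist (c j0) (c (j0 - 1)) = 1 := by
      have h1 := hstep1 (j0 - 1)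
      rw [show (j0 - 1) + 1 = j0 by ring] at h1
      rw [PD14.hdist_comm]
      exact h1
    have hvp : hdist v (c (j0 + 1)) = d + 1 := by
      have h1 := PD14.hdist_step (v := v) hp1
      have h2 := hj0min (j0 + 1) (Finset.mem_univ _)
      omega
    have hvm : hdist v (c (j0 - 1)) = d + 1 := by
      have h1 := PD14.hdist_step (v := v) hm1
      have h2 := hj0min (j0 - 1) (Finset.mem_univ _)
      omega
    obtain ⟨ep, hep⟩ : ∃ e, symmDiff (c j0) (c (j0 + 1)) = {e} :=
      Finset.card_eq_one.mp hp1
    obtain ⟨em, hem⟩ : ∃ e, symmDiff (c j0) (c (j0 - 1)) = {e} :=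
      Finset.card_eq_one.mp hm1
    -- ep, em not in the v–γ difference
    have hepv : ep ∉ symmDiff v (c j0) := by
      intro hmem
      have hcalc : symmDiff v (c (j0 + 1)) = symmDiff (symmDiff v (c j0)) {ep} := by
        rw [← hep, symmDiff_assoc, symmDiff_symmDiff_cancel_left]
      have h2 := PD14.symmDiff_singleton_card hmem
      have h3 : hdist v (c (j0 + 1)) + 1 = d := by
        show (symmDiff v (c (j0 + 1))).card + 1 = d
        rw [hcalc]
        exact h2
      omega
    have hemv : em ∉ symmDiff v (c j0) := by
      intro hmem
      have hcalc : symmDiff v (c (j0 - 1)) = symmDiff (symmDiff v (c j0)) {em} := by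
        rw [← hem, symmDiff_assoc, symmDiff_symmDiff_cancel_left]
      have h2 := PD14.symmDiff_singleton_card hmem
      have h3 : hdist v (c (j0 - 1)) + 1 = d := by
        show (symmDiff v (c (j0 - 1))).card + 1 = d
        rw [hcalc]
        exact h2
      omega
    obtain ⟨p, hp⟩ : ∃ x, x ∈ symmDiff v (c j0) := by
      have hpos : 0 < (symmDiff v (c j0)).card := hd1
      obtain ⟨x, hx⟩ := Finset.card_pos.mp hpos
      exact ⟨x, hx⟩
    have hpep : p ≠ ep := fun h => hepv (h ▸ hp)
    have hpem : p ≠ em := fun h => hemv (h ▸ hp)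
    -- ep ≠ em since the two neighbours are at distance 2
    have hpm2 : hdist (c (j0 + 1)) (c (j0 - 1)) = 2 := by
      have hx : j0 - 1 = (j0 + 1) + ((k - 2 : ℕ) : Fin k) := by
        have hsum : ((k - 2 : ℕ) : Fin k) + ((2:ℕ) : Fin k) = 0 := by
          rw [← Nat.cast_add, show k - 2 + 2 = k by omega]
          exact Fin.natCast_self k
        have hneg : ((k - 2 : ℕ) : Fin k) = - ((2:ℕ) : Fin k) :=
          eq_neg_of_add_eq_zero_left hsum
        rw [hneg, show ((2:ℕ) : Fin k) = 1 + 1 by push_cast; ring]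
        ring
      rw [hx, hshift, Nat.mod_eq_of_lt (by omega)]
      omega
    have hepem : ep ≠ em := by
      intro h
      have h1 : c (j0 + 1) = symmDiff (c j0) {ep} := by
        rw [← hep, symmDiff_symmDiff_cancel_left]
      have h2 : c (j0 - 1) = symmDiff (c j0) {em} := by
        rw [← hem, symmDiff_symmDiff_cancel_left]
      have h3 : c (j0 + 1) = c (j0 - 1) := by rw [h1, h2, h]
      rw [h3, PD14.hdist_self] at hpm2
      omega
    set Y : Finset (Fin m) := {p, ep, em} with hYdef
    have hYmem : ∀ x, x ∈ Y ↔ x = p ∨ x = ep ∨ x = em := by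
      intro x
      simp [hYdef]
    have hYcard : Y.card = 3 := by
      rw [hYdef, Finset.card_insert_of_notMem (by simp [hpep, hpem]),
        Finset.card_insert_of_notMem (by simp [hepem]), Finset.card_singleton]
    -- memberships of the three coordinates in pairwise differences
    have hpvγ : p ∈ symmDiff v (c j0) := hp
    have hepγ : ep ∈ symmDiff (c j0) (c (j0 + 1)) := by rw [hep]; exact Finset.mem_singleton_self ep
    have hemγ : em ∈ symmDiff (c j0) (c (j0 - 1)) := by rw [hem]; exact Finset.mem_singleton_self em
    -- Y is contained in each "all classes" difference
    have hYin : ∀ (i : Fin k), Y ⊆ symmDiff (c i) (c (i + ((n:ℕ):Fin k))) := by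
      intro i x hx
      rcases (hYmem x).mp hx with rfl | rfl | rfl
      · exact hdiffs i v hvD (c j0) (c_memD j0) hpvγ
      · exact hdiffs i (c j0) (c_memD j0) (c (j0 + 1)) (c_memD _) hepγ
      · exact hdiffs i (c j0) (c_memD j0) (c (j0 - 1)) (c_memD _) hemγ
    have hYvw : Y ⊆ symmDiff v w := by
      intro x hx
      rcases (hYmem x).mp hx with rfl | rfl | rfl
      · exact hdvw v hvD (c j0) (c_memD j0) hpvγ
      · exact hdvw (c j0) (c_memD j0) (c (j0 + 1)) (c_memD _) hepγ
      · exact hdvw (c j0) (c_memD j0) (c (j0 - 1)) (c_memD _) hemγ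
    -- traces of the eight points
    have T0 : (symmDiff (c j0) (c j0)) ∩ Y = ∅ := by simp
    have Tv : (symmDiff (c j0) v) ∩ Y = {p} := by
      ext x
      simp only [Finset.mem_inter, Finset.mem_singleton]
      constructor
      · rintro ⟨hx1, hx2⟩
        rcases (hYmem x).mp hx2 with rfl | rfl | rfl
        · rfl
        · exact absurd (by rwa [symmDiff_comm] at hx1) hepv
        · exact absurd (by rwa [symmDiff_comm] at hx1) hemv
      · rintro rfl
        refine ⟨?_, ?_⟩
        · rwa [symmDiff_comm]
        · exact (hYmem _).mpr (Or.inl rfl)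
    have Tp : (symmDiff (c j0) (c (j0 + 1))) ∩ Y = {ep} := by
      rw [hep]
      exact Finset.inter_eq_left.mpr (Finset.singleton_subset_iff.mpr ((hYmem ep).mpr (Or.inr (Or.inl rfl))))
    have Tm : (symmDiff (c j0) (c (j0 - 1))) ∩ Y = {em} := by
      rw [hem]
      exact Finset.inter_eq_left.mpr (Finset.singleton_subset_iff.mpr ((hYmem em).mpr (Or.inr (Or.inr rfl))))
    have Tstar : (symmDiff (c j0) (c (j0 + ((n:ℕ):Fin k)))) ∩ Y = Y :=
      Finset.inter_eq_right.mpr (hYin j0)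
    have Tw : (symmDiff (c j0) w) ∩ Y = symmDiff {p} Y := by
      have hdec : symmDiff (c j0) w = symmDiff (symmDiff (c j0) v) (symmDiff v w) := by
        rw [symmDiff_assoc, symmDiff_symmDiff_cancel_left]
      rw [hdec, PD14.inter_symmDiff, Tv, Finset.inter_eq_right.mpr hYvw]
    have Twp : (symmDiff (c j0) (c ((j0 + 1) + ((n:ℕ):Fin k)))) ∩ Y = symmDiff {ep} Y := by
      have hdec : symmDiff (c j0) (c ((j0 + 1) + ((n:ℕ):Fin k))) =
          symmDiff (symmDiff (c j0) (c (j0 + 1))) (symmDiff (c (j0 + 1)) (c ((j0 + 1) + ((n:ℕ):Fin k)))) := by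
        rw [symmDiff_assoc, symmDiff_symmDiff_cancel_left]
      rw [hdec, PD14.inter_symmDiff, Tp, Finset.inter_eq_right.mpr (hYin (j0 + 1))]
    have Twm : (symmDiff (c j0) (c ((j0 - 1) + ((n:ℕ):Fin k)))) ∩ Y = symmDiff {em} Y := by
      have hdec : symmDiff (c j0) (c ((j0 - 1) + ((n:ℕ):Fin k))) =
          symmDiff (symmDiff (c j0) (c (j0 - 1))) (symmDiff (c (j0 - 1)) (c ((j0 - 1) + ((n:ℕ):Fin k)))) := by
        rw [symmDiff_assoc, symmDiff_symmDiff_cancel_left]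
      rw [hdec, PD14.inter_symmDiff, Tm, Finset.inter_eq_right.mpr (hYin (j0 - 1))]
    -- realize every subset of Y as a trace relative to c j0
    have key : ∀ S ⊆ Y, ∃ B ∈ D, (symmDiff (c j0) B) ∩ Y = S := by
      intro S hS
      have hmem : ∀ x ∈ S, x = p ∨ x = ep ∨ x = em := fun x hx => (hYmem x).mp (hS hx)
      by_cases h1 : p ∈ S <;> by_cases h2 : ep ∈ S <;> by_cases h3 : em ∈ S
      · -- all three
        refine ⟨c (j0 + ((n:ℕ):Fin k)), c_memD _, ?_⟩
        rw [Tstar]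
        refine Finset.Subset.antisymm ?_ hS
        intro x hx
        rcases (hYmem x).mp hx with rfl | rfl | rfl
        exacts [h1, h2, h3]
      · -- p, ep
        refine ⟨c ((j0 - 1) + ((n:ℕ):Fin k)), c_memD _, ?_⟩
        rw [Twm]
        ext x
        simp only [Finset.mem_symmDiff, Finset.mem_singleton, hYmem]
        constructor
        · rintro (⟨rfl, hnx⟩ | ⟨hx, hne⟩)
          · exact absurd (Or.inr (Or.inr rfl)) hnx
          · rcases hx with rfl | rfl | rfl
            · exact h1
            · exact h2
            · exact absurd rfl hne
        · intro hxS
          rcases hmem x hxS with rfl | rfl | rfl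
          · exact Or.inr ⟨Or.inl rfl, fun h => hpem h⟩
          · exact Or.inr ⟨Or.inr (Or.inl rfl), fun h => hepem h⟩
          · exact absurd hxS h3
      · -- p, em
        refine ⟨c ((j0 + 1) + ((n:ℕ):Fin k)), c_memD _, ?_⟩
        rw [Twp]
        ext x
        simp only [Finset.mem_symmDiff, Finset.mem_singleton, hYmem]
        constructor
        · rintro (⟨rfl, hnx⟩ | ⟨hx, hne⟩)
          · exact absurd (Or.inr (Or.inl rfl)) hnx
          · rcases hx with rfl | rfl | rfl
            · exact h1
            · exact absurd rfl hne
            · exact h3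
        · intro hxS
          rcases hmem x hxS with rfl | rfl | rfl
          · exact Or.inr ⟨Or.inl rfl, fun h => hpep h⟩
          · exact absurd hxS h2
          · exact Or.inr ⟨Or.inr (Or.inr rfl), fun h => hepem h.symm⟩
      · -- p only
        refine ⟨v, hvD, ?_⟩
        rw [Tv]
        ext x
        simp only [Finset.mem_singleton]
        constructor
        · rintro rfl; exact h1
        · intro hxS
          rcases hmem x hxS with rfl | rfl | rfl
          · rfl
          · exact absurd hxS h2
          · exact absurd hxS h3
      · -- ep, em
        refine ⟨w, hwD, ?_⟩
        rw [Tw]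
        ext x
        simp only [Finset.mem_symmDiff, Finset.mem_singleton, hYmem]
        constructor
        · rintro (⟨rfl, hnx⟩ | ⟨hx, hne⟩)
          · exact absurd (Or.inl rfl) hnx
          · rcases hx with rfl | rfl | rfl
            · exact absurd rfl hne
            · exact h2
            · exact h3
        · intro hxS
          rcases hmem x hxS with rfl | rfl | rfl
          · exact absurd hxS h1
          · exact Or.inr ⟨Or.inr (Or.inl rfl), fun h => hpep h.symm⟩
          · exact Or.inr ⟨Or.inr (Or.inr rfl), fun h => hpem h.symm⟩
      · -- ep only
        refine ⟨c (j0 + 1), c_memD _, ?_⟩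
        rw [Tp]
        ext x
        simp only [Finset.mem_singleton]
        constructor
        · rintro rfl; exact h2
        · intro hxS
          rcases hmem x hxS with rfl | rfl | rfl
          · exact absurd hxS h1
          · rfl
          · exact absurd hxS h3
      · -- em only
        refine ⟨c (j0 - 1), c_memD _, ?_⟩
        rw [Tm]
        ext x
        simp only [Finset.mem_singleton]
        constructor
        · rintro rfl; exact h3
        · intro hxS
          rcases hmem x hxS with rfl | rfl | rfl
          · exact absurd hxS h1
          · exact absurd hxS h2
          · rfl
      · -- empty
        refine ⟨c j0, c_memD _, ?_⟩
        rw [T0]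
        symm
        rw [Finset.eq_empty_iff_forall_notMem]
        intro x hxS
        rcases hmem x hxS with rfl | rfl | rfl
        · exact h1 hxS
        · exact h2 hxS
        · exact h3 hxS
    -- D shatters Y, contradiction with VC dimension ≤ 2
    have hsh : Shatters D Y := by
      intro Z hZ
      have hsub : symmDiff (c j0 ∩ Y) Z ⊆ Y := by
        intro x hx
        rw [Finset.mem_symmDiff] at hx
        rcases hx with ⟨hx1, _⟩ | ⟨hx1, _⟩
        · exact Finset.inter_subset_right hx1
        · exact hZ hx1
      obtain ⟨B, hBD, hBt⟩ := key (symmDiff (c j0 ∩ Y) Z) hsub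
      refine ⟨B, hBD, ?_⟩
      have hBY : B ∩ Y = symmDiff (c j0 ∩ Y) ((symmDiff (c j0) B) ∩ Y) := by
        conv_lhs => rw [show B = symmDiff (c j0) (symmDiff (c j0) B) from
          (symmDiff_symmDiff_cancel_left (c j0) B).symm]
        rw [PD14.inter_symmDiff]
      rw [hBY, hBt, symmDiff_symmDiff_cancel_left]
    have := hvc Y hsh
    rw [hYcard] at this
    omega
  · intro hvC
    obtain ⟨i, rfl⟩ := c_surjC v hvC
    exact ⟨c_memD i, c (i + ((n:ℕ) : Fin k)), c_memD _, hF5 i⟩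
end
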